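/- arXiv:0908.1113 — 5 statements merged into one kernel-verified Lean document; each statement's English description precedes it below -/
import Mathlib

section
/- If 𝒜 is an analytic set of well-founded trees on ℕ, then sup{o(T) : T ∈ 𝒜} < ω₁. -/
open Ordinal Set

/-- A tree on ℕ: a set of finite sequences closed under taking prefixes. -/
def IsTreeOn (T : Set (List ℕ)) : Prop := ∀ s ∈ T, ∀ t : List ℕ, t <+: s → t ∈ T

/-- A tree has an infinite branch. -/
def HasInfiniteBranch (T : Set (List ℕ)) : Prop :=
  ∃ f : ℕ → ℕ, ∀ n : ℕ, (List.ofFn (fun i : Fin n => f i)) ∈ T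

/-- A well-founded tree: no infinite branch. -/
def WellFoundedTree (T : Set (List ℕ)) : Prop := ¬ HasInfiniteBranch T

/-- Tree derivative: keep the nodes with a proper end-extension in the tree. -/
def treeDeriv (T : Set (List ℕ)) : Set (List ℕ) :=
  {s ∈ T | ∃ t ∈ T, s <+: t ∧ s ≠ t}

/-- Transfinite iterates of the tree derivative. -/
noncomputable def treeDerivIter (T : Set (List ℕ)) (ξ : Ordinal) : Set (List ℕ) :=
  Ordinal.limitRecOn ξ T (fun _ ih => treeDeriv ih)
    (fun o _ ih => ⋂ (o' : Ordinal) (h : o' < o), ih o' h)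

/-- The order of a (well-founded) tree: least ξ with T^(ξ) = ∅. -/
noncomputable def treeOrder (T : Set (List ℕ)) : Ordinal :=
  sInf {ξ | treeDerivIter T ξ = ∅}

/-- A < B for finite subsets of ℕ: every element of A is below every element of B. -/
def FinsetLt (A B : Finset ℕ) : Prop := ∀ a ∈ A, ∀ b ∈ B, a < b

/-- The recursive description of a system of Schreier families `S ξ`, with
(for each limit ordinal) some fixed increasing cofinal sequence used. -/
structure IsSchreierFamily (S : Ordinal → Set (Finset ℕ)) : Prop where
  zero : S 0 = {F | (∃ n : ℕ, F = {n}) ∨ F = ∅}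
  succ : ∀ ζ : Ordinal, S (ζ + 1) =
    {F | F = ∅ ∨ ∃ (n : ℕ) (hn : 1 ≤ n) (G : Fin n → Finset ℕ),
      (∀ i, G i ∈ S ζ) ∧ (∀ i j : Fin n, i < j → FinsetLt (G i) (G j)) ∧
      (∀ a ∈ G ⟨0, hn⟩, n ≤ a) ∧ F = Finset.univ.biUnion G}
  limit : ∀ ξ : Ordinal, Order.IsSuccLimit ξ → ∃ f : ℕ → Ordinal, StrictMono f ∧
    (∀ n, f n < ξ) ∧ (⨆ n, f n) = ξ ∧
    S ξ = ⋃ n : ℕ, {F ∈ S (f n) | ∀ a ∈ F, n ≤ a}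

/-- The tree associated to a family of finite subsets of ℕ: finite subsets are
identified with the lists enumerating them in increasing order. -/
def schreierTree (A : Set (Finset ℕ)) : Set (List ℕ) :=
  {l | l.Pairwise (· < ·) ∧ l.toFinset ∈ A}

section Banach

variable {X Y : Type*} [NormedAddCommGroup X] [NormedSpace ℝ X]
  [NormedAddCommGroup Y] [NormedSpace ℝ Y]

/-- A strictly singular operator: bounded below on no infinite-dimensional
closed subspace (equivalently, an isomorphism on no such subspace). -/
def StrictlySingular (T : X →L[ℝ] Y) : Prop :=
  ∀ Z : Submodule ℝ X, IsClosed (Z : Set X) → ¬ FiniteDimensional ℝ Z →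
    ¬ ∃ c > 0, ∀ z ∈ Z, c * ‖z‖ ≤ ‖T z‖

/-- A basic sequence, via the basis-constant inequality. -/
def IsBasicSeq (x : ℕ → X) : Prop :=
  ∃ K : ℝ, ∀ (m n : ℕ), m ≤ n → ∀ a : ℕ → ℝ,
    ‖∑ i ∈ Finset.range m, a i • x i‖ ≤ K * ‖∑ i ∈ Finset.range n, a i • x i‖

/-- A normalized basic sequence. -/
def NormalizedBasicSeq (x : ℕ → X) : Prop := (∀ n, ‖x n‖ = 1) ∧ IsBasicSeq x

/-- `𝒜`-strictly singular operators, for a family `𝒜` of finite subsets of ℕ. -/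
def ASS (𝒜 : Set (Finset ℕ)) (T : X →L[ℝ] Y) : Prop :=
  ∀ ε > (0:ℝ), ∀ x : ℕ → X, NormalizedBasicSeq x →
    ∃ F ∈ 𝒜, ∃ v ∈ Submodule.span ℝ (x '' (F : Set ℕ)), v ≠ 0 ∧ ‖T v‖ < ε * ‖v‖

/-- `‖T|_Z‖ < ε`. -/
def RestrictNormLt (T : X →L[ℝ] Y) (Z : Submodule ℝ X) (ε : ℝ) : Prop :=
  ∃ c, 0 ≤ c ∧ c < ε ∧ ∀ z ∈ Z, ‖T z‖ ≤ c * ‖z‖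

/-- Hereditarily indecomposable space. -/
def HereditarilyIndecomposable (X : Type*) [NormedAddCommGroup X] [NormedSpace ℝ X] : Prop :=
  ∀ W Z : Submodule ℝ X, IsClosed (W : Set X) → IsClosed (Z : Set X) →
    ¬ FiniteDimensional ℝ W → ¬ FiniteDimensional ℝ Z → ∀ ε > (0:ℝ),
    ∃ w ∈ W, ∃ z ∈ Z, ‖w‖ = 1 ∧ ‖z‖ = 1 ∧ ‖w - z‖ < ε

/-- A space with few operators: every operator is λI + S with S strictly singular. -/
def FewOperators (X : Type*) [NormedAddCommGroup X] [NormedSpace ℝ X] : Prop :=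
  ∀ T : X →L[ℝ] X, ∃ (lam : ℝ) (S : X →L[ℝ] X), StrictlySingular S ∧
    T = lam • ContinuousLinearMap.id ℝ X + S

/-- The rational linear combination of `x ∘ l` with coefficients `a`. -/
def ratComb (x : ℕ → X) (l : List ℕ) (a : ℕ → ℚ) : X :=
  ∑ i ∈ Finset.range l.length, (a i : ℝ) • x (l.getD i 0)

/-- The tree `T(R, m, (x_n))` of sequences of indices on which `R` is
`(1/m)`-bounded below over rational coefficients. -/
def opTree (R : X →L[ℝ] Y) (m : ℕ) (x : ℕ → X) : Set (List ℕ) :=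
  {l | ∀ a : ℕ → ℚ, (1 / (m : ℝ)) * ‖ratComb x l a‖ ≤ ‖R (ratComb x l a)‖}

end Banach

/-- The unit ball of L(X,Y). -/
def SOTBall (X Y : Type*) [NormedAddCommGroup X] [NormedSpace ℝ X]
    [NormedAddCommGroup Y] [NormedSpace ℝ Y] : Type _ := {T : X →L[ℝ] Y // ‖T‖ ≤ 1}

/-- The strong operator topology on the unit ball of L(X,Y). -/
instance SOTBall.topologicalSpace (X Y : Type*) [NormedAddCommGroup X] [NormedSpace ℝ X]
    [NormedAddCommGroup Y] [NormedSpace ℝ Y] : TopologicalSpace (SOTBall X Y) :=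
  TopologicalSpace.induced (fun T => (T.1 : X → Y)) Pi.topologicalSpace
def SOTBall.op {X Y : Type*} [NormedAddCommGroup X] [NormedSpace ℝ X]
    [NormedAddCommGroup Y] [NormedSpace ℝ Y] (T : SOTBall X Y) : X →L[ℝ] Y :=
  Subtype.val T

/-- Normalized sequences with basis constant at most `k`. -/
def basisConstSet (X : Type*) [NormedAddCommGroup X] [NormedSpace ℝ X] (k : ℝ) :
    Set (ℕ → X) :=
  {x | (∀ n, ‖x n‖ = 1) ∧ ∀ m n : ℕ, m ≤ n → ∀ a : ℕ → ℝ,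
    ‖∑ i ∈ Finset.range m, a i • x i‖ ≤ k * ‖∑ i ∈ Finset.range n, a i • x i‖}

open Classical in
/-- The tree `T(R,m,(x_n))` coded as an element of `2^{ℕ^{<ℕ}}`. -/
noncomputable def phiTree {X Y : Type*} [NormedAddCommGroup X] [NormedSpace ℝ X]
    [NormedAddCommGroup Y] [NormedSpace ℝ Y] (m : ℕ) (R : X →L[ℝ] Y) (x : ℕ → X) :
    List ℕ → Bool :=
  fun l => if l ∈ opTree R m x then true else false

section Theorems

open MeasureTheory TopologicalSpace

section Aux

lemma treeDerivIter_zero (T : Set (List ℕ)) : treeDerivIter T 0 = T :=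
  Ordinal.limitRecOn_zero _ _ _

lemma treeDerivIter_succ (T : Set (List ℕ)) (o : Ordinal) :
    treeDerivIter T (Order.succ o) = treeDeriv (treeDerivIter T o) :=
  Ordinal.limitRecOn_succ _ _ _ _

lemma treeDerivIter_limit (T : Set (List ℕ)) {o : Ordinal} (h : Order.IsSuccLimit o) :
    treeDerivIter T o = ⋂ (o' : Ordinal) (_ : o' < o), treeDerivIter T o' :=
  Ordinal.limitRecOn_limit _ _ _ _ h

lemma treeDerivIter_subset (T : Set (List ℕ)) : ∀ ξ : Ordinal, treeDerivIter T ξ ⊆ T := by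
  intro ξ
  induction ξ using Ordinal.induction with
  | _ ξ IH =>
    rcases Ordinal.zero_or_succ_or_isSuccLimit ξ with rfl | ⟨ζ, rfl⟩ | hl
    · rw [treeDerivIter_zero]
    · rw [treeDerivIter_succ]
      exact fun s hs => IH ζ (Order.lt_succ ζ) hs.1
    · rw [treeDerivIter_limit T hl]
      intro s hs
      simp only [Set.mem_iInter] at hs
      exact (treeDerivIter_zero T) ▸ hs 0 hl.pos

lemma rank_lt_omega1 {α : Type} [Countable α] {r : α → α → Prop} (hwf : WellFounded r)
    (a : α) : (hwf.apply a).rank < (Cardinal.aleph 1).ord := by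
  induction a using WellFounded.induction hwf with
  | _ a IH =>
    rw [Acc.rank_eq]
    apply Ordinal.iSup_lt_ord
    · rw [Cardinal.isRegular_aleph_one.cof_eq]
      exact lt_of_le_of_lt Cardinal.mk_le_aleph0 Cardinal.aleph0_lt_aleph_one
    · rintro ⟨b, hb⟩
      have he : (((hwf.apply a).inv hb).rank) = (hwf.apply b).rank := rfl
      rw [he]
      exact (Cardinal.isSuccLimit_ord (Cardinal.aleph0_le_aleph 1)).succ_lt (IH b hb)

universe uL

lemma omega1_lift :
    Ordinal.lift.{uL, 0} ((Cardinal.aleph 1).ord) = (Cardinal.aleph.{uL} 1).ord := by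
  rw [Cardinal.lift_ord, Cardinal.lift_aleph, Ordinal.lift_one]

lemma rank_lt_omega1_lift {α : Type} [Countable α] {r : α → α → Prop} (hwf : WellFounded r)
    (a : α) : Ordinal.lift.{uL, 0} (hwf.apply a).rank < (Cardinal.aleph.{uL} 1).ord := by
  rw [← omega1_lift.{uL}]
  exact Ordinal.lift_lt.2 (rank_lt_omega1 hwf a)

/-- The big amalgamated tree-relation used in the boundedness argument. -/
def bigW (f : (ℕ → ℕ) → {T : List ℕ → Bool // IsTreeOn {l | T l = true}}) :
    Set (List (ℕ × ℕ)) :=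
  {l | ∃ x : ℕ → ℕ, (∀ i : Fin l.length, (l.get i).1 = x i) ∧
    (f x).1 (l.map Prod.snd) = true}

def bigR (f : (ℕ → ℕ) → {T : List ℕ → Bool // IsTreeOn {l | T l = true}}) :
    List (ℕ × ℕ) → List (ℕ × ℕ) → Prop :=
  fun b a => b ∈ bigW f ∧ a <+: b ∧ a ≠ b

/-- Pair a node with the corresponding initial segment of a branch code. -/
def psiL (x : ℕ → ℕ) (s : List ℕ) : List (ℕ × ℕ) :=
  List.ofFn (fun i : Fin s.length => (x i, s.get i))

lemma psiL_length (x : ℕ → ℕ) (s : List ℕ) : (psiL x s).length = s.length := by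
  simp [psiL]

lemma psiL_getElem (x : ℕ → ℕ) (s : List ℕ) (i : ℕ) (h : i < (psiL x s).length) :
    (psiL x s)[i] = (x i, s[i]'(by simpa [psiL_length] using h)) := by
  simp [psiL]

lemma psiL_map_snd (x : ℕ → ℕ) (s : List ℕ) : (psiL x s).map Prod.snd = s := by
  apply List.ext_getElem
  · simp [psiL_length]
  · intro i h1 h2
    rw [List.getElem_map, psiL_getElem]

lemma psiL_prefix (x : ℕ → ℕ) {s t : List ℕ} (h : s <+: t) : psiL x s <+: psiL x t := by
  have hlen : s.length ≤ t.length := h.length_le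
  have : psiL x s = (psiL x t).take s.length := by
    apply List.ext_getElem
    · simp [psiL_length, hlen]
    · intro i h1 h2
      rw [List.getElem_take, psiL_getElem, psiL_getElem]
      have h3 : i < s.length := by simpa [psiL_length] using h1
      have := h.getElem h3
      simp [this]
  rw [this]
  exact List.take_prefix _ _

lemma psiL_ne (x : ℕ → ℕ) {s t : List ℕ} (h : s ≠ t) : psiL x s ≠ psiL x t := by
  intro he
  apply h
  have := congrArg (List.map Prod.snd) he
  rwa [psiL_map_snd, psiL_map_snd] at this

lemma bigR_wf (f : (ℕ → ℕ) → {T : List ℕ → Bool // IsTreeOn {l | T l = true}})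
    (fcont : Continuous f)
    (hWF : ∀ x : ℕ → ℕ, WellFoundedTree {l | (f x).1 l = true}) :
    WellFounded (bigR f) := by
  by_contra hwf
  have hna : ∃ a, ¬Acc (bigR f) a := by
    by_contra h
    push_neg at h
    exact hwf ⟨h⟩
  obtain ⟨a0, ha0⟩ := hna
  have hstep0 : ∀ x : {a // ¬Acc (bigR f) a}, ∃ y : {a // ¬Acc (bigR f) a}, bigR f y.1 x.1 := by
    rintro ⟨x, hx⟩
    obtain ⟨b, hb1, hb2⟩ := exists_not_acc_lt_of_not_acc hx
    exact ⟨⟨b, hb1⟩, hb2⟩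
  choose F hF using hstep0
  have hchain : ∀ n : ℕ, bigR f ((F^[n + 1] ⟨a0, ha0⟩ : {a // ¬Acc (bigR f) a}).1)
      ((F^[n] ⟨a0, ha0⟩ : {a // ¬Acc (bigR f) a}).1) := by
    intro n
    rw [Function.iterate_succ']
    exact hF _
  set l : ℕ → List (ℕ × ℕ) := fun n => (F^[n + 1] ⟨a0, ha0⟩ : {a // ¬Acc (bigR f) a}).1 with hl
  have hmemW : ∀ n, l n ∈ bigW f := fun n => (hchain n).1
  have hstep : ∀ n, l n <+: l (n + 1) ∧ l n ≠ l (n + 1) :=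
    fun n => ⟨(hchain (n + 1)).2.1, (hchain (n + 1)).2.2⟩
  have hlenlt : ∀ n, (l n).length < (l (n + 1)).length := by
    intro n
    rcases hstep n with ⟨hp, hne⟩
    rcases lt_or_ge (l n).length (l (n + 1)).length with h | h
    · exact h
    · exact absurd (hp.eq_of_length_le h) hne
  have hlen : ∀ n, n ≤ (l n).length := by
    intro n
    induction n with
    | zero => exact Nat.zero_le _
    | succ n ih => exact Nat.lt_of_le_of_lt ih (hlenlt n)
  have hmono : ∀ m n, m ≤ n → l m <+: l n := by
    intro m n h
    induction n, h using Nat.le_induction with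
    | base => exact List.prefix_refl _
    | succ n _ ih => exact ih.trans (hstep n).1
  have hco : ∀ m n i (hm : i < (l m).length) (hn : i < (l n).length),
      (l m)[i] = (l n)[i] := by
    intro m n i hm hn
    rcases le_total m n with h | h
    · exact (hmono m n h).getElem hm
    · exact ((hmono n m h).getElem hn).symm
  have hix : ∀ i : ℕ, i < (l (i + 1)).length := fun i => Nat.lt_of_lt_of_le i.lt_succ_self (hlen (i + 1))
  set x : ℕ → ℕ := fun i => ((l (i + 1))[i]'(hix i)).1 with hx
  set β : ℕ → ℕ := fun i => ((l (i + 1))[i]'(hix i)).2 with hβ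
  choose xw hw1 hw2 using hmemW
  set βlist : ℕ → List ℕ := fun m => List.ofFn (fun i : Fin m => β i) with hβlist
  have hpre : ∀ m n, m ≤ n → βlist m <+: (l n).map Prod.snd := by
    intro m n hmn
    have hmln : m ≤ (l n).length := le_trans hmn (hlen n)
    have heq : βlist m = ((l n).map Prod.snd).take m := by
      apply List.ext_getElem
      · simp [hβlist, hmln]
      · intro i h1 h2
        have him : i < m := by simpa [hβlist] using h1
        have hiln : i < (l n).length := lt_of_lt_of_le him hmln
        simp only [hβlist, List.getElem_ofFn, List.getElem_take, List.getElem_map]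
        rw [hβ]
        simp only []
        rw [hco (i + 1) n i (hix i) hiln]
    rw [heq]
    exact List.take_prefix _ _
  have hβmem : ∀ m n, m ≤ n → (f (xw n)).1 (βlist m) = true := by
    intro m n hmn
    have htree := (f (xw n)).2
    exact htree _ (hw2 n) _ (hpre m n hmn)
  have htend : Filter.Tendsto xw Filter.atTop (nhds x) := by
    apply tendsto_pi_nhds.2
    intro i
    apply Filter.Tendsto.congr' _ tendsto_const_nhds
    filter_upwards [Filter.eventually_ge_atTop (i + 1)] with n hn
    have hiln : i < (l n).length := lt_of_lt_of_le hn (hlen n)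
    have h1 := hw1 n ⟨i, hiln⟩
    simp only [List.get_eq_getElem] at h1
    rw [hx]
    simp only []
    rw [hco (i + 1) n i (hix i) hiln]
    exact h1
  have hbranch : ∀ m, (f x).1 (βlist m) = true := by
    intro m
    have hφ : Continuous fun y : ℕ → ℕ => (f y).1 (βlist m) :=
      (continuous_apply (βlist m)).comp (continuous_subtype_val.comp fcont)
    have h1 : Filter.Tendsto (fun n => (f (xw n)).1 (βlist m)) Filter.atTop
        (nhds ((f x).1 (βlist m))) := (hφ.tendsto x).comp htend
    have h2 : Filter.Tendsto (fun n => (f (xw n)).1 (βlist m)) Filter.atTop (nhds true) := by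
      apply Filter.Tendsto.congr' _ tendsto_const_nhds
      filter_upwards [Filter.eventually_ge_atTop m] with n hn
      exact (hβmem m n hn).symm
    exact tendsto_nhds_unique h1 h2
  exact hWF x ⟨β, fun m => hbranch m⟩

lemma main_rank (f : (ℕ → ℕ) → {T : List ℕ → Bool // IsTreeOn {l | T l = true}})
    (hwf : WellFounded (bigR f)) :
    ∀ ξ : Ordinal.{uL}, ∀ x : ℕ → ℕ, ∀ s : List ℕ,
      s ∈ treeDerivIter {l | (f x).1 l = true} ξ →
        ξ ≤ Ordinal.lift.{uL} (hwf.apply (psiL x s)).rank := by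
  intro ξ
  induction ξ using Ordinal.induction with
  | _ ξ IH =>
    intro x s hs
    rcases Ordinal.zero_or_succ_or_isSuccLimit ξ with rfl | ⟨ζ, rfl⟩ | hlimit
    · exact zero_le
    · rw [treeDerivIter_succ] at hs
      obtain ⟨hsζ, t, htζ, hpre, hne⟩ := hs
      have htT : t ∈ {l | (f x).1 l = true} := treeDerivIter_subset _ ζ htζ
      have hrel : bigR f (psiL x t) (psiL x s) := by
        refine ⟨⟨x, ?_, ?_⟩, psiL_prefix x hpre, psiL_ne x hne⟩
        · intro i
          simp only [List.get_eq_getElem]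
          rw [psiL_getElem]
        · rw [psiL_map_snd]
          exact htT
      have hlt : (hwf.apply (psiL x t)).rank < (hwf.apply (psiL x s)).rank := by
        have := Acc.rank_lt_of_rel (hwf.apply (psiL x s)) hrel
        have he : (((hwf.apply (psiL x s)).inv hrel).rank) = (hwf.apply (psiL x t)).rank := rfl
        rwa [he] at this
      exact Order.succ_le_of_lt (lt_of_le_of_lt (IH ζ (Order.lt_succ ζ) x t htζ)
        (Ordinal.lift_lt.2 hlt))
    · rw [treeDerivIter_limit _ hlimit] at hs
      simp only [Set.mem_iInter] at hs
      by_contra hc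
      push_neg at hc
      have hsucc : Order.succ (Ordinal.lift.{uL} (hwf.apply (psiL x s)).rank) < ξ :=
        hlimit.succ_lt hc
      have := IH _ hsucc x s (hs _ hsucc)
      exact (Order.lt_succ _).not_ge this

end Aux

theorem stmt3 (𝒜 : Set {T : List ℕ → Bool // IsTreeOn {l | T l = true}})
    (hWF : ∀ T ∈ 𝒜, WellFoundedTree {l | T.1 l = true})
    (hA : MeasureTheory.AnalyticSet 𝒜) :
    (⨆ T : 𝒜, treeOrder {l | T.1.1 l = true}) < (Cardinal.aleph 1).ord := by
  have hlim1 : Order.IsSuccLimit ((Cardinal.aleph 1).ord) :=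
    Cardinal.isSuccLimit_ord (Cardinal.aleph0_le_aleph 1)
  rw [MeasureTheory.AnalyticSet] at hA
  rcases hA with hA | ⟨f, fcont, frange⟩
  · subst hA
    rw [ciSup_of_empty]
    simpa using hlim1.pos
  · have hwfAll : ∀ x : ℕ → ℕ, WellFoundedTree {l | (f x).1 l = true} :=
      fun x => hWF (f x) (frange ▸ Set.mem_range_self x)
    have hwf := bigR_wf f fcont hwfAll
    set Λ : Ordinal.{u_1} :=
      (⨆ a : List (ℕ × ℕ), Ordinal.lift.{u_1} (hwf.apply a).rank) + 1 with hΛdef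
    have hsup : (⨆ a : List (ℕ × ℕ), Ordinal.lift.{u_1} (hwf.apply a).rank)
        < (Cardinal.aleph 1).ord := by
      apply Ordinal.iSup_lt_ord_lift
      · rw [Cardinal.isRegular_aleph_one.cof_eq]
        calc Cardinal.lift.{u_1, 0} (Cardinal.mk (List (ℕ × ℕ)))
              ≤ Cardinal.lift.{u_1, 0} Cardinal.aleph0 :=
              Cardinal.lift_le.2 Cardinal.mk_le_aleph0
          _ = Cardinal.aleph0 := Cardinal.lift_aleph0
          _ < Cardinal.aleph 1 := Cardinal.aleph0_lt_aleph_one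
      · exact fun a => rank_lt_omega1_lift hwf a
    have hΛ : Λ < (Cardinal.aleph 1).ord := by
      rw [hΛdef, Ordinal.add_one_eq_succ]
      exact hlim1.succ_lt hsup
    have hbound : ∀ T : 𝒜, treeOrder {l | T.1.1 l = true} ≤ Λ := by
      rintro ⟨T, hT⟩
      obtain ⟨x, rfl⟩ : ∃ x, f x = T := by rw [← frange] at hT; exact hT
      apply csInf_le'
      show treeDerivIter _ Λ = ∅
      ext s
      simp only [Set.mem_empty_iff_false, iff_false]
      intro hs
      have h1 := main_rank f hwf Λ x s hs
      have h2 : Ordinal.lift.{u_1} (hwf.apply (psiL x s)).rank < Λ := by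
        rw [hΛdef, Ordinal.add_one_eq_succ]
        exact lt_of_le_of_lt
          (Ordinal.le_iSup (fun a : List (ℕ × ℕ) => Ordinal.lift.{u_1} (hwf.apply a).rank)
            (psiL x s)) (Order.lt_succ _)
      exact absurd h1 (not_le.2 h2)
    exact (ciSup_le' hbound).trans_lt hΛ

end Theorems
end

section
/- Let X be a Banach space in which every bounded operator has the form λI + S with S strictly singular ('few operators'). If T : X → X is a bounded operator such that for every ε > 0 there exists an infinite-dimensional closed subspace Z of X with ‖T|_Z‖ < ε, then T is strictly singular. -/
open Ordinal Set

section Theorems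

open MeasureTheory TopologicalSpace

theorem stmt7 {X : Type*} [NormedAddCommGroup X] [NormedSpace ℝ X]
    (hX : FewOperators X) (T : X →L[ℝ] X)
    (h : ∀ ε > (0:ℝ), ∃ Z : Submodule ℝ X, IsClosed (Z : Set X) ∧
      ¬ FiniteDimensional ℝ Z ∧ RestrictNormLt T Z ε) :
    StrictlySingular T := by
  obtain ⟨lam, S, hS, hT⟩ := hX T
  have hlam : lam = 0 := by
    by_contra hl
    have hpos : 0 < |lam| / 4 := by positivity
    obtain ⟨Z, hZc, hZfd, c, hc0, hcε, hc⟩ := h (|lam| / 4) hpos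
    have hns := hS Z hZc hZfd
    push_neg at hns
    obtain ⟨z, hzZ, hz⟩ := hns (|lam| / 4) hpos
    -- hz : ‖S z‖ < |lam|/4 * ‖z‖ (as ¬ ≤)
    have hz' : |lam| / 4 * ‖z‖ > ‖S z‖ := hz
    have hznorm : 0 < ‖z‖ := by
      by_contra hz0
      push_neg at hz0
      have : ‖z‖ = 0 := le_antisymm hz0 (norm_nonneg z)
      rw [this] at hz'
      simp at hz'
      exact absurd hz' (not_lt.mpr (norm_nonneg _))
    have hTz : T z = lam • z + S z := by
      rw [hT]; simp
    have h1 : ‖T z‖ ≤ c * ‖z‖ := hc z hzZ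
    have h2 : |lam| * ‖z‖ ≤ ‖T z‖ + ‖S z‖ := by
      have : ‖lam • z‖ ≤ ‖T z‖ + ‖S z‖ := by
        calc ‖lam • z‖ = ‖(lam • z + S z) - S z‖ := by rw [add_sub_cancel_right]
          _ ≤ ‖lam • z + S z‖ + ‖S z‖ := norm_sub_le _ _
          _ = ‖T z‖ + ‖S z‖ := by rw [hTz]
      simpa [norm_smul, Real.norm_eq_abs] using this
    have h3 : ‖T z‖ < |lam| / 4 * ‖z‖ :=
      lt_of_le_of_lt h1 (by nlinarith)
    nlinarith
  rw [hlam] at hT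
  simp at hT
  rwa [hT]

end Theorems
end

section
/- Let X and Y be separable Banach spaces. The set of strictly singular operators of norm at most 1 is a coanalytic subset of the unit ball of L(X,Y) equipped with the strong operator topology. -/
open Ordinal Set

open Filter Topology

section Aux
variable {X Y : Type*} [NormedAddCommGroup X] [NormedSpace ℝ X]
  [NormedAddCommGroup Y] [NormedSpace ℝ Y]


namespace SOTBall

lemma norm_op_le (T : SOTBall X Y) : ‖T.op‖ ≤ 1 := T.2

lemma continuous_coeFn :
    Continuous fun T : SOTBall X Y => (T.op : X → Y) := continuous_induced_dom

lemma continuous_eval (v : X) :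
    Continuous fun T : SOTBall X Y => T.op v :=
  (continuous_apply v).comp continuous_coeFn

lemma op_norm_apply_le (T : SOTBall X Y) (v : X) : ‖T.op v‖ ≤ ‖v‖ := by
  calc ‖T.op v‖ ≤ ‖T.op‖ * ‖v‖ := T.op.le_opNorm v
    _ ≤ 1 * ‖v‖ := mul_le_mul_of_nonneg_right T.norm_op_le (norm_nonneg _)
    _ = ‖v‖ := one_mul _

lemma continuous_eval2 :
    Continuous fun p : SOTBall X Y × X => p.1.op p.2 := by
  rw [continuous_iff_continuousAt]
  rintro ⟨T₀, v₀⟩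
  rw [ContinuousAt, Metric.tendsto_nhds]
  intro ε hε
  have h1 : ∀ᶠ p : SOTBall X Y × X in 𝓝 (T₀, v₀), ‖p.2 - v₀‖ < ε / 2 := by
    have hc : Continuous fun p : SOTBall X Y × X => ‖p.2 - v₀‖ :=
      (continuous_snd.sub continuous_const).norm
    exact (isOpen_lt hc continuous_const).mem_nhds (by simpa using half_pos hε)
  have h2 : ∀ᶠ p : SOTBall X Y × X in 𝓝 (T₀, v₀), ‖p.1.op v₀ - T₀.op v₀‖ < ε / 2 := by
    have hc : Continuous fun p : SOTBall X Y × X => ‖p.1.op v₀ - T₀.op v₀‖ :=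
      (((continuous_eval v₀).comp continuous_fst).sub continuous_const).norm
    exact (isOpen_lt hc continuous_const).mem_nhds (by simpa using half_pos hε)
  filter_upwards [h1, h2] with p hp1 hp2
  rw [dist_eq_norm]
  have hsplit : p.1.op p.2 - T₀.op v₀ = p.1.op (p.2 - v₀) + (p.1.op v₀ - T₀.op v₀) := by
    rw [map_sub]; abel
  rw [hsplit]
  calc ‖p.1.op (p.2 - v₀) + (p.1.op v₀ - T₀.op v₀)‖
      ≤ ‖p.1.op (p.2 - v₀)‖ + ‖p.1.op v₀ - T₀.op v₀‖ := norm_add_le _ _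
    _ < ε / 2 + ε / 2 := add_lt_add ((p.1.op_norm_apply_le _).trans_lt hp1) hp2
    _ = ε := add_halves ε

end SOTBall
end Aux

lemma exists_unit_far {E : Type*} [NormedAddCommGroup E] [NormedSpace ℝ E]
    (hE : ¬ FiniteDimensional ℝ E) (W : Submodule ℝ E) (hW : FiniteDimensional ℝ W) :
    ∃ v : E, ‖v‖ = 1 ∧ ∀ y ∈ W, (1:ℝ)/2 ≤ ‖v - y‖ := by
  haveI := hW
  have hWc : IsClosed (W : Set E) := Submodule.closed_of_finiteDimensional W
  have hne : ∃ x : E, x ∉ W := by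
    by_contra h
    push_neg at h
    have htop : W = ⊤ := eq_top_iff.2 fun x _ => h x
    rw [htop] at hW
    exact hE (Module.Finite.equiv (Submodule.topEquiv (R := ℝ) (M := E)))
  obtain ⟨x₀, hx₀W, hx₀⟩ := riesz_lemma hWc hne (by norm_num : (2⁻¹:ℝ) < 1)
  have hx0 : x₀ ≠ 0 := fun h => hx₀W (h ▸ W.zero_mem)
  have hn : ‖x₀‖ ≠ 0 := norm_ne_zero_iff.2 hx0
  refine ⟨‖x₀‖⁻¹ • x₀, ?_, fun y hy => ?_⟩
  · rw [norm_smul, norm_inv, norm_norm, inv_mul_cancel₀ hn]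
  · have h1 : ‖x₀‖⁻¹ • x₀ - y = ‖x₀‖⁻¹ • (x₀ - ‖x₀‖ • y) := by
      rw [smul_sub, smul_smul, inv_mul_cancel₀ hn, one_smul]
    rw [h1, norm_smul, norm_inv, norm_norm]
    have h2 := hx₀ (‖x₀‖ • y) (W.smul_mem _ hy)
    calc (1:ℝ)/2 = ‖x₀‖⁻¹ * (2⁻¹ * ‖x₀‖) := by field_simp
      _ ≤ ‖x₀‖⁻¹ * ‖x₀ - ‖x₀‖ • y‖ :=
        mul_le_mul_of_nonneg_left h2 (inv_nonneg.2 (norm_nonneg _))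

lemma exists_seq_far {E : Type*} [NormedAddCommGroup E] [NormedSpace ℝ E]
    (hE : ¬ FiniteDimensional ℝ E) :
    ∃ x : ℕ → E, (∀ k, ‖x k‖ = 1) ∧
      ∀ k, ∀ y ∈ Submodule.span ℝ (x '' {i | i < k + 1}), (1:ℝ)/2 ≤ ‖x (k+1) - y‖ := by
  classical
  have step : ∀ (n : ℕ) (t : Fin n → E), ∃ v : E, ‖v‖ = 1 ∧
      ∀ y ∈ Submodule.span ℝ (Set.range t), (1:ℝ)/2 ≤ ‖v - y‖ := fun n t =>
    exists_unit_far hE _ (FiniteDimensional.span_of_finite ℝ (Set.finite_range t))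
  choose sv hv1 hv2 using step
  let tup : (n : ℕ) → Fin n → E := fun n =>
    Nat.rec (motive := fun n => Fin n → E) Fin.elim0
      (fun n ih => Fin.snoc ih (sv n ih)) n
  have tup_succ : ∀ n, tup (n+1) = Fin.snoc (tup n) (sv n (tup n)) := fun n => rfl
  let x : ℕ → E := fun k => sv k (tup k)
  have coh : ∀ (n k : ℕ) (h : k < n), tup n ⟨k, h⟩ = x k := by
    intro n
    induction n with
    | zero => intro k h; omega
    | succ n ih =>
      intro k h
      rcases Nat.lt_succ_iff_lt_or_eq.1 h with h' | h'
      · have he : (⟨k, h⟩ : Fin (n+1)) = Fin.castSucc ⟨k, h'⟩ := rfl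
        rw [tup_succ, he, Fin.snoc_castSucc]
        exact ih k h'
      · subst h'
        have he : (⟨k, h⟩ : Fin (k+1)) = Fin.last k := rfl
        rw [tup_succ, he, Fin.snoc_last]
  refine ⟨x, fun k => hv1 _ _, ?_⟩
  intro k y hy
  have hrange : x '' {i | i < k+1} = Set.range (tup (k+1)) := by
    ext e
    constructor
    · rintro ⟨i, hi, rfl⟩
      exact ⟨⟨i, hi⟩, coh (k+1) i hi⟩
    · rintro ⟨⟨i, hi⟩, rfl⟩
      exact ⟨i, hi, (coh (k+1) i hi).symm⟩
  rw [hrange] at hy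
  exact hv2 (k+1) (tup (k+1)) y hy

section Polish
variable {X Y : Type*} [NormedAddCommGroup X] [NormedSpace ℝ X]
  [NormedAddCommGroup Y] [NormedSpace ℝ Y]

open TopologicalSpace in
theorem SOTBall.polishSpace [SeparableSpace X] [CompleteSpace Y] [SeparableSpace Y] :
    PolishSpace (SOTBall X Y) := by
  have : Nonempty X := ⟨0⟩
  obtain ⟨u, hu⟩ := TopologicalSpace.exists_dense_seq X
  set J : SOTBall X Y → ℕ → Y := fun T n => T.op (u n) with hJ
  have Jcont : Continuous J := continuous_pi fun n => SOTBall.continuous_eval (u n)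
  have key : ∀ (T₀ : SOTBall X Y) (v : X),
      Tendsto (fun T : SOTBall X Y => T.op v) (comap J (𝓝 (J T₀))) (𝓝 (T₀.op v)) := by
    intro T₀ v
    have base : ∀ n, Tendsto (fun T : SOTBall X Y => T.op (u n))
        (comap J (𝓝 (J T₀))) (𝓝 (T₀.op (u n))) := fun n =>
      ((continuous_apply n).tendsto (J T₀)).comp tendsto_comap
    rw [Metric.tendsto_nhds]
    intro ε hε
    obtain ⟨n, hn⟩ := hu.exists_dist_lt v (by positivity : (0:ℝ) < ε/3)
    have hb := (Metric.tendsto_nhds.1 (base n)) (ε/3) (by positivity)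
    filter_upwards [hb] with T hT
    have e1 : dist (T.op v) (T.op (u n)) ≤ dist v (u n) := by
      rw [dist_eq_norm, dist_eq_norm, ← map_sub]
      exact T.op_norm_apply_le _
    have e3 : dist (T₀.op (u n)) (T₀.op v) ≤ dist (u n) v := by
      rw [dist_eq_norm, dist_eq_norm, ← map_sub]
      exact T₀.op_norm_apply_le _
    calc dist (T.op v) (T₀.op v)
        ≤ dist (T.op v) (T.op (u n)) + dist (T.op (u n)) (T₀.op (u n))
            + dist (T₀.op (u n)) (T₀.op v) := dist_triangle4 _ _ _ _
      _ < ε/3 + ε/3 + ε/3 := by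
          have := dist_comm v (u n) ▸ hn
          exact add_lt_add (add_lt_add (e1.trans_lt hn) hT) (e3.trans_lt this)
      _ = ε := by ring
  have hInd : IsInducing J := by
    rw [isInducing_iff_nhds]
    intro T₀
    refine le_antisymm (Filter.tendsto_iff_comap.mp (Jcont.tendsto T₀)) ?_
    have hNhds : 𝓝 T₀ = comap (fun T : SOTBall X Y => (T.op : X → Y)) (𝓝 (T₀.op : X → Y)) :=
      nhds_induced _ _
    rw [hNhds]
    rw [← Filter.tendsto_iff_comap]
    rw [tendsto_pi_nhds]
    exact fun v => key T₀ v
  have hInj : Function.Injective J := by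
    intro S T hST
    have hfun : (S.op : X → Y) = T.op := by
      refine Continuous.ext_on hu S.op.continuous T.op.continuous ?_
      rintro _ ⟨n, rfl⟩
      exact congrFun hST n
    have hop : S.op = T.op := DFunLike.coe_injective hfun
    exact Subtype.ext hop
  have hClosed : IsClosed (Set.range J) := by
    apply isClosed_of_closure_subset
    intro g hg
    have hmemC : ∀ (s : Set (ℕ → Y)), IsClosed s → Set.range J ⊆ s → g ∈ s := fun s hs hsub =>
      hs.closure_subset_iff.2 hsub hg
    have hC : ∀ (p q : ℝ) (n m k : ℕ), ‖p • g n + q • g m - g k‖ ≤ ‖p • u n + q • u m - u k‖ := by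
      intro p q n m k
      refine hmemC {g' | ‖p • g' n + q • g' m - g' k‖ ≤ ‖p • u n + q • u m - u k‖} ?_ ?_
      · exact isClosed_le
          ((((continuous_apply n).const_smul p).add ((continuous_apply m).const_smul q)).sub
            (continuous_apply k)).norm continuous_const
      · rintro _ ⟨T, rfl⟩
        show ‖p • T.op (u n) + q • T.op (u m) - T.op (u k)‖ ≤ _
        rw [← map_smul, ← map_smul, ← map_add, ← map_sub]
        exact T.op_norm_apply_le _
    have hC2 : ∀ n, ‖g n‖ ≤ ‖u n‖ := by
      intro n
      refine hmemC {g' | ‖g' n‖ ≤ ‖u n‖} (isClosed_le (continuous_apply n).norm continuous_const) ?_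
      rintro _ ⟨T, rfl⟩
      exact T.op_norm_apply_le _
    have hLip : ∀ n m, ‖g n - g m‖ ≤ ‖u n - u m‖ := by
      intro n m
      have := hC 1 0 n 0 m
      simpa using this
    -- construct the limit function
    have hex : ∀ v : X, ∃ y : Y, ∀ n, ‖y - g n‖ ≤ ‖v - u n‖ := by
      intro v
      have happ : ∀ j : ℕ, ∃ n, dist v (u n) < 1/(j+1) := fun j =>
        hu.exists_dist_lt v (by positivity)
      choose s hs using happ
      have hcau : CauchySeq fun j => g (s j) := by
        rw [Metric.cauchySeq_iff]
        intro ε hε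
        obtain ⟨N, hN⟩ := exists_nat_gt (2/ε)
        have hNp : (0:ℝ) < N + 1 := by positivity
        have hhalf : (1:ℝ)/(N+1) < ε/2 := by
          rw [div_lt_div_iff₀ hNp (by norm_num : (0:ℝ) < 2)]
          have h2 : 2/ε < N + 1 := hN.trans (lt_add_one _)
          nlinarith [(div_lt_iff₀ hε).1 h2]
        have hbound : ∀ c, N ≤ c → dist v (u (s c)) < ε/2 := by
          intro c hc
          calc dist v (u (s c)) < 1/(c+1) := hs c
            _ ≤ 1/(N+1) := by
                apply one_div_le_one_div_of_le hNp
                exact_mod_cast by omega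
            _ < ε/2 := hhalf
        refine ⟨N, fun a ha b hb => ?_⟩
        have h1 : dist (g (s a)) (g (s b)) ≤ dist (u (s a)) (u (s b)) := by
          rw [dist_eq_norm, dist_eq_norm]
          exact hLip _ _
        have h2 : dist (u (s a)) (u (s b)) ≤ dist v (u (s a)) + dist v (u (s b)) := by
          rw [dist_comm v (u (s a))]
          exact dist_triangle _ _ _
        calc dist (g (s a)) (g (s b)) ≤ dist v (u (s a)) + dist v (u (s b)) := h1.trans h2
          _ < ε/2 + ε/2 := add_lt_add (hbound a ha) (hbound b hb)
          _ = ε := add_halves ε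
      obtain ⟨y, hy⟩ := cauchySeq_tendsto_of_complete hcau
      refine ⟨y, fun n => ?_⟩
      have hle : ∀ j, dist (g (s j)) (g n) ≤ 1/(j+1) + dist v (u n) := by
        intro j
        have h1 : dist (g (s j)) (g n) ≤ dist (u (s j)) (u n) := by
          rw [dist_eq_norm, dist_eq_norm]; exact hLip _ _
        have h2 : dist (u (s j)) (u n) ≤ dist (u (s j)) v + dist v (u n) := dist_triangle _ _ _
        have h3 : dist (u (s j)) v ≤ 1/(j+1) := by
          rw [dist_comm]; exact (hs j).le
        linarith
      have hgn : Tendsto (fun j => dist (g (s j)) (g n)) atTop (𝓝 (dist y (g n))) :=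
        (hy.dist tendsto_const_nhds)
      have hrhs : Tendsto (fun j : ℕ => 1/((j:ℝ)+1) + dist v (u n)) atTop
          (𝓝 (0 + dist v (u n))) :=
        (tendsto_one_div_add_atTop_nhds_zero_nat).add tendsto_const_nhds
      have := le_of_tendsto_of_tendsto' hgn hrhs hle
      rw [zero_add, dist_eq_norm, dist_eq_norm] at this
      exact this
    choose f hf using hex
    have hfu : ∀ n, f (u n) = g n := by
      intro n
      have h0 := hf (u n) n
      rw [_root_.sub_self, norm_zero] at h0
      exact sub_eq_zero.1 (norm_le_zero_iff.1 h0)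
    have happrox : ∀ (v : X) (δ : ℝ), 0 < δ → ∃ n, ‖v - u n‖ < δ := by
      intro v δ hδ
      obtain ⟨n, hn⟩ := hu.exists_dist_lt v hδ
      exact ⟨n, by rwa [dist_eq_norm] at hn⟩
    have hlin : ∀ (p q : ℝ) (v w : X), f (p • v + q • w) = p • f v + q • f w := by
      intro p q v w
      have hden : (0:ℝ) < 2 * (|p| + |q| + 1) := by positivity
      have hle0 : ‖f (p • v + q • w) - (p • f v + q • f w)‖ ≤ 0 := by
        refine le_of_forall_pos_le_add fun ε hε => ?_
        rw [zero_add]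
        set δ := ε / (2 * (|p| + |q| + 1)) with hδdef
        have hδ : 0 < δ := by positivity
        obtain ⟨n, hn⟩ := happrox v δ hδ
        obtain ⟨m, hm⟩ := happrox w δ hδ
        obtain ⟨k, hk⟩ := happrox (p • v + q • w) δ hδ
        have a1 : ‖f (p • v + q • w) - g k‖ ≤ δ := (hf _ k).trans hk.le
        have a2 : ‖p • g n + q • g m - g k‖ ≤ ‖p • u n + q • u m - u k‖ := hC p q n m k
        have a3 : ‖p • u n + q • u m - u k‖ ≤ |p| * δ + |q| * δ + δ := by
          have hid : p • u n + q • u m - u k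
              = p • (u n - v) + q • (u m - w) + ((p • v + q • w) - u k) := by
            rw [smul_sub, smul_sub]; abel
          rw [hid]
          have := norm_add_le (p • (u n - v) + q • (u m - w)) ((p • v + q • w) - u k)
          have h2 := norm_add_le (p • (u n - v)) (q • (u m - w))
          have h3 : ‖p • (u n - v)‖ ≤ |p| * δ := by
            rw [norm_smul, Real.norm_eq_abs]
            exact mul_le_mul_of_nonneg_left (by rw [norm_sub_rev]; exact hn.le) (abs_nonneg p)
          have h4 : ‖q • (u m - w)‖ ≤ |q| * δ := by
            rw [norm_smul, Real.norm_eq_abs]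
            exact mul_le_mul_of_nonneg_left (by rw [norm_sub_rev]; exact hm.le) (abs_nonneg q)
          have h5 : ‖(p • v + q • w) - u k‖ ≤ δ := hk.le
          linarith
        have a4 : ‖p • (g n - f v)‖ ≤ |p| * δ := by
          rw [norm_smul, Real.norm_eq_abs]
          exact mul_le_mul_of_nonneg_left (by rw [norm_sub_rev]; exact (hf v n).trans hn.le)
            (abs_nonneg p)
        have a5 : ‖q • (g m - f w)‖ ≤ |q| * δ := by
          rw [norm_smul, Real.norm_eq_abs]
          exact mul_le_mul_of_nonneg_left (by rw [norm_sub_rev]; exact (hf w m).trans hm.le)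
            (abs_nonneg q)
        have hid2 : f (p • v + q • w) - (p • f v + q • f w)
            = (f (p • v + q • w) - g k) - ((p • g n + q • g m) - g k)
              + p • (g n - f v) + q • (g m - f w) := by
          rw [smul_sub, smul_sub]; abel
        have hδmul : δ * (2 * (|p| + |q| + 1)) = ε := by
          rw [hδdef, div_mul_cancel₀]
          exact ne_of_gt hden
        calc ‖f (p • v + q • w) - (p • f v + q • f w)‖
            = ‖(f (p • v + q • w) - g k) - ((p • g n + q • g m) - g k)
              + p • (g n - f v) + q • (g m - f w)‖ := by rw [hid2]
          _ ≤ ‖(f (p • v + q • w) - g k) - ((p • g n + q • g m) - g k)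
              + p • (g n - f v)‖ + ‖q • (g m - f w)‖ := norm_add_le _ _
          _ ≤ (‖(f (p • v + q • w) - g k) - ((p • g n + q • g m) - g k)‖
              + ‖p • (g n - f v)‖) + ‖q • (g m - f w)‖ := by
                have := norm_add_le ((f (p • v + q • w) - g k) - ((p • g n + q • g m) - g k))
                  (p • (g n - f v))
                linarith
          _ ≤ ((‖f (p • v + q • w) - g k‖ + ‖(p • g n + q • g m) - g k‖)
              + ‖p • (g n - f v)‖) + ‖q • (g m - f w)‖ := by
                have := norm_sub_le (f (p • v + q • w) - g k) ((p • g n + q • g m) - g k)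
                linarith
          _ ≤ ε := by
                have := a2.trans a3
                rw [← hδmul]
                nlinarith [abs_nonneg p, abs_nonneg q, hδ.le]
      rw [← sub_eq_zero]
      exact norm_le_zero_iff.1 hle0
    have hnorm : ∀ v, ‖f v‖ ≤ ‖v‖ := by
      intro v
      refine le_of_forall_pos_le_add fun ε hε => ?_
      obtain ⟨n, hn⟩ := happrox v (ε/2) (half_pos hε)
      have h1 : ‖f v‖ ≤ ‖f v - g n‖ + ‖g n‖ := by
        have := norm_add_le (f v - g n) (g n)
        simpa using this
      have h2 : ‖f v - g n‖ ≤ ε/2 := (hf v n).trans hn.le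
      have h3 : ‖g n‖ ≤ ‖u n‖ := hC2 n
      have h4 : ‖u n‖ ≤ ‖u n - v‖ + ‖v‖ := by
        have := norm_add_le (u n - v) v
        simpa using this
      have h5 : ‖u n - v‖ ≤ ε/2 := by rw [norm_sub_rev]; exact hn.le
      linarith
    have hadd : ∀ a b, f (a + b) = f a + f b := fun a b => by
      have := hlin 1 1 a b; simpa using this
    have hzero : f 0 = 0 := by
      have := hlin 0 0 0 0; simpa using this
    have hsmul : ∀ (c : ℝ) (a : X), f (c • a) = c • f a := fun c a => by
      have := hlin c 0 a 0; simpa [hzero] using this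
    let L : X →ₗ[ℝ] Y := { toFun := f, map_add' := hadd, map_smul' := hsmul }
    have hnorm' : ∀ v, ‖L v‖ ≤ 1 * ‖v‖ := fun v => by
      rw [one_mul]; exact hnorm v
    let T : X →L[ℝ] Y := L.mkContinuous 1 hnorm'
    have hTnorm : ‖T‖ ≤ 1 := L.mkContinuous_norm_le zero_le_one hnorm'
    refine ⟨⟨T, hTnorm⟩, ?_⟩
    funext n
    exact hfu n
  exact (Topology.IsClosedEmbedding.mk ⟨hInd, hInj⟩ hClosed).polishSpace

end Polish

section AN
variable {X Y : Type*} [NormedAddCommGroup X] [NormedSpace ℝ X]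
  [NormedAddCommGroup Y] [NormedSpace ℝ Y]

lemma range_fin_eq (x : ℕ → X) (k : ℕ) :
    Set.range (fun i : Fin k => x i) = x '' {i | i < k} := by
  ext e
  constructor
  · rintro ⟨⟨i, hi⟩, rfl⟩
    exact ⟨i, hi, rfl⟩
  · rintro ⟨i, hi, rfl⟩
    exact ⟨⟨i, hi⟩, rfl⟩

lemma mem_span_lt_iff (x : ℕ → X) (k : ℕ) (y : X) :
    y ∈ Submodule.span ℝ (x '' {i | i < k}) ↔
      ∃ a : ℕ → ℝ, y = ∑ i ∈ Finset.range k, a i • x i := by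
  classical
  rw [← range_fin_eq, Submodule.mem_span_range_iff_exists_fun]
  constructor
  · rintro ⟨c, rfl⟩
    refine ⟨fun j => if h : j < k then c ⟨j, h⟩ else 0, ?_⟩
    rw [← Fin.sum_univ_eq_sum_range (fun j => (if h : j < k then c ⟨j, h⟩ else 0) • x j) k]
    refine Finset.sum_congr rfl fun i _ => ?_
    rw [dif_pos i.isLt]
  · rintro ⟨a, rfl⟩
    refine ⟨fun i => a i, ?_⟩
    rw [← Fin.sum_univ_eq_sum_range (fun j => a j • x j) k]

lemma mem_span_range_imp (x : ℕ → X) (y : X) (hy : y ∈ Submodule.span ℝ (Set.range x)) :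
    ∃ (L : ℕ) (a : ℕ → ℝ), y = ∑ i ∈ Finset.range L, a i • x i := by
  classical
  obtain ⟨c, rfl⟩ := Finsupp.mem_span_range_iff_exists_finsupp.1 hy
  refine ⟨(c.support.sup id) + 1, fun i => c i, ?_⟩
  rw [Finsupp.sum]
  refine Finset.sum_subset ?_ ?_
  · intro i hi
    rw [Finset.mem_range]
    have := Finset.le_sup (f := id) hi
    simpa using Nat.lt_succ_of_le this
  · intro i _ hni
    rw [Finsupp.notMem_support_iff.1 hni, zero_smul]

def ANset (n : ℕ) : Set (SOTBall X Y × (ℕ → X)) :=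
  {p | (∀ k, ‖p.2 k‖ = 1) ∧
    (∀ (k : ℕ) (a : ℕ → ℝ),
      (1:ℝ)/2 ≤ ‖p.2 (k+1) - ∑ i ∈ Finset.range (k+1), a i • p.2 i‖) ∧
    (∀ (L : ℕ) (a : ℕ → ℝ),
      (1/(n+1:ℝ)) * ‖∑ i ∈ Finset.range L, a i • p.2 i‖ ≤
        ‖p.1.op (∑ i ∈ Finset.range L, a i • p.2 i)‖)}

lemma isClosed_ANset (n : ℕ) : IsClosed (ANset n : Set (SOTBall X Y × (ℕ → X))) := by
  have hsum : ∀ (L : ℕ) (a : ℕ → ℝ),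
      Continuous fun x : ℕ → X => ∑ i ∈ Finset.range L, a i • x i := fun L a =>
    continuous_finset_sum _ fun i _ => (continuous_apply i).const_smul (a i)
  have h1 : IsClosed {p : SOTBall X Y × (ℕ → X) | ∀ k, ‖p.2 k‖ = 1} := by
    rw [Set.setOf_forall]
    exact isClosed_iInter fun k =>
      isClosed_eq ((continuous_apply k).comp continuous_snd).norm continuous_const
  have h2 : IsClosed {p : SOTBall X Y × (ℕ → X) | ∀ (k : ℕ) (a : ℕ → ℝ),
      (1:ℝ)/2 ≤ ‖p.2 (k+1) - ∑ i ∈ Finset.range (k+1), a i • p.2 i‖} := by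
    rw [Set.setOf_forall]
    refine isClosed_iInter fun k => ?_
    rw [Set.setOf_forall]
    refine isClosed_iInter fun a => ?_
    exact isClosed_le continuous_const
      ((((continuous_apply (k+1)).comp continuous_snd).sub
        ((hsum (k+1) a).comp continuous_snd)).norm)
  have h3 : IsClosed {p : SOTBall X Y × (ℕ → X) | ∀ (L : ℕ) (a : ℕ → ℝ),
      (1/(n+1:ℝ)) * ‖∑ i ∈ Finset.range L, a i • p.2 i‖ ≤
        ‖p.1.op (∑ i ∈ Finset.range L, a i • p.2 i)‖} := by
    rw [Set.setOf_forall]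
    refine isClosed_iInter fun L => ?_
    rw [Set.setOf_forall]
    refine isClosed_iInter fun a => ?_
    have hc1 : Continuous fun p : SOTBall X Y × (ℕ → X) =>
        (1/(n+1:ℝ)) * ‖∑ i ∈ Finset.range L, a i • p.2 i‖ :=
      continuous_const.mul (((hsum L a).comp continuous_snd).norm)
    have hc2 : Continuous fun p : SOTBall X Y × (ℕ → X) =>
        ‖p.1.op (∑ i ∈ Finset.range L, a i • p.2 i)‖ :=
      (SOTBall.continuous_eval2.comp
        (continuous_fst.prodMk ((hsum L a).comp continuous_snd))).norm
    exact isClosed_le hc1 hc2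
  have : (ANset n : Set (SOTBall X Y × (ℕ → X)))
      = {p | ∀ k, ‖p.2 k‖ = 1} ∩ ({p | ∀ (k : ℕ) (a : ℕ → ℝ),
        (1:ℝ)/2 ≤ ‖p.2 (k+1) - ∑ i ∈ Finset.range (k+1), a i • p.2 i‖} ∩
        {p | ∀ (L : ℕ) (a : ℕ → ℝ),
          (1/(n+1:ℝ)) * ‖∑ i ∈ Finset.range L, a i • p.2 i‖ ≤
            ‖p.1.op (∑ i ∈ Finset.range L, a i • p.2 i)‖}) := rfl
  rw [this]
  exact h1.inter (h2.inter h3)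

end AN

section Main
variable {X Y : Type*} [NormedAddCommGroup X] [NormedSpace ℝ X]
  [NormedAddCommGroup Y] [NormedSpace ℝ Y]

theorem compl_eq_iUnion :
    ({T : SOTBall X Y | StrictlySingular T.op}ᶜ) =
      ⋃ n : ℕ, Prod.fst '' (ANset n : Set (SOTBall X Y × (ℕ → X))) := by
  ext T
  simp only [Set.mem_compl_iff, Set.mem_setOf_eq, Set.mem_iUnion, Set.mem_image]
  constructor
  · intro hT
    rw [StrictlySingular] at hT
    push_neg at hT
    obtain ⟨Z, hZcl, hZfd, c, hc, hbd⟩ := hT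
    obtain ⟨n, hn⟩ := exists_nat_gt (1/c)
    have hcn : 1/(n+1:ℝ) ≤ c := by
      rw [div_le_iff₀ (by positivity)]
      have h2 : 1/c < (n:ℝ)+1 := hn.trans (lt_add_one _)
      rw [div_lt_iff₀ hc] at h2
      nlinarith
    obtain ⟨xz, hx1, hx2⟩ := exists_seq_far (E := ↥Z) hZfd
    set x : ℕ → X := fun k => (xz k : X) with hxdef
    refine ⟨n, (T, x), ⟨?_, ?_, ?_⟩, rfl⟩
    · intro k
      exact hx1 k
    · intro k a
      set yz : ↥Z := ∑ i ∈ Finset.range (k+1), a i • xz i with hyz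
      have hymem : yz ∈ Submodule.span ℝ (xz '' {i | i < k+1}) := by
        refine Submodule.sum_mem _ fun i hi => Submodule.smul_mem _ _ ?_
        exact Submodule.subset_span ⟨i, Finset.mem_range.1 hi, rfl⟩
      have h := hx2 k yz hymem
      have hcoe : ((xz (k+1) - yz : ↥Z) : X)
          = x (k+1) - ∑ i ∈ Finset.range (k+1), a i • x i := by
        push_cast [hyz]
        rfl
      calc (1:ℝ)/2 ≤ ‖xz (k+1) - yz‖ := h
        _ = ‖x (k+1) - ∑ i ∈ Finset.range (k+1), a i • x i‖ := by
            rw [← hcoe]; rfl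
    · intro L a
      set v : X := ∑ i ∈ Finset.range L, a i • x i with hv
      have hvZ : v ∈ Z := by
        refine Submodule.sum_mem _ fun i _ => Submodule.smul_mem _ _ ?_
        exact SetLike.coe_mem (xz i)
      calc (1/(n+1:ℝ)) * ‖v‖ ≤ c * ‖v‖ :=
            mul_le_mul_of_nonneg_right hcn (norm_nonneg _)
        _ ≤ ‖T.op v‖ := hbd v hvZ
  · rintro ⟨n, ⟨T', x⟩, ⟨h1, h2, h3⟩, rfl⟩
    intro hSS
    set S : Submodule ℝ X := Submodule.span ℝ (Set.range x) with hSdef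
    set Z : Submodule ℝ X := S.topologicalClosure with hZdef
    have hcl : IsClosed (Z : Set X) := Submodule.isClosed_topologicalClosure S
    have hnotfd : ¬ FiniteDimensional ℝ Z := by
      intro hfd
      haveI := hfd
      haveI : FiniteDimensional ℝ S :=
        Submodule.finiteDimensional_of_le S.le_topologicalClosure
      set W : ℕ → Submodule ℝ X := fun j => Submodule.span ℝ (x '' {i | i < j+1}) with hW
      haveI hWfd : ∀ j, FiniteDimensional ℝ (W j) := fun j =>
        FiniteDimensional.span_of_finite ℝ ((Set.finite_Iio (j+1)).image x)
      have hnotmem : ∀ j, x (j+1) ∉ W j := by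
        intro j hmem
        obtain ⟨a, ha⟩ := (mem_span_lt_iff x (j+1) _).1 hmem
        have hx := h2 j a
        rw [← ha, _root_.sub_self, norm_zero] at hx
        norm_num at hx
      have hlt : ∀ j, W j < W (j+1) := by
        intro j
        refine lt_of_le_of_ne (Submodule.span_mono (Set.image_mono fun i hi => ?_)) ?_
        · exact Nat.lt_succ_of_lt hi
        · intro heq
          exact hnotmem j (heq ▸ Submodule.subset_span ⟨j+1, Nat.lt_succ_self _, rfl⟩)
      have hrank : ∀ j, j ≤ Module.finrank ℝ (W j) := by
        intro j
        induction j with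
        | zero => exact Nat.zero_le _
        | succ j ih =>
          haveI := hWfd (j+1)
          have := Submodule.finrank_lt_finrank_of_lt (hlt j)
          omega
      have hle : ∀ j, Module.finrank ℝ (W j) ≤ Module.finrank ℝ S := fun j =>
        Submodule.finrank_mono (Submodule.span_mono (Set.image_subset_range x _))
      have ha := hrank (Module.finrank ℝ S + 1)
      have hb := hle (Module.finrank ℝ S + 1)
      omega
    refine hSS Z hcl hnotfd ⟨1/(n+1:ℝ), by positivity, ?_⟩
    intro z hz
    have hKc : IsClosed {w : X | (1/(n+1:ℝ)) * ‖w‖ ≤ ‖T'.op w‖} :=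
      isClosed_le (continuous_const.mul continuous_norm) T'.op.continuous.norm
    have hsub : (S : Set X) ⊆ {w : X | (1/(n+1:ℝ)) * ‖w‖ ≤ ‖T'.op w‖} := by
      intro w hw
      obtain ⟨L, a, rfl⟩ := mem_span_range_imp x w hw
      exact h3 L a
    have hZsub : (Z : Set X) ⊆ {w : X | (1/(n+1:ℝ)) * ‖w‖ ≤ ‖T'.op w‖} := by
      rw [hZdef, Submodule.topologicalClosure_coe]
      exact closure_minimal hsub hKc
    exact hZsub hz

end Main

section Theorems

open MeasureTheory TopologicalSpace

theorem stmt13 {X Y : Type*} [NormedAddCommGroup X] [NormedSpace ℝ X] [CompleteSpace X]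
    [SeparableSpace X] [NormedAddCommGroup Y] [NormedSpace ℝ Y] [CompleteSpace Y]
    [SeparableSpace Y] :
    MeasureTheory.AnalyticSet ({T : SOTBall X Y | StrictlySingular T.op}ᶜ) := by
  rw [compl_eq_iUnion]
  haveI : PolishSpace (SOTBall X Y) := SOTBall.polishSpace
  refine MeasureTheory.AnalyticSet.iUnion fun n => ?_
  exact ((isClosed_ANset n).analyticSet).image_of_continuous continuous_fst

end Theorems
end

section
/- Let X, Y be separable Banach spaces such that a bounded operator R : X → Y is strictly singular if and only if for every ε > 0 there exists an infinite-dimensional closed subspace Z of X with ‖R|_Z‖ < ε. Then the set of strictly singular operators of norm at most 1 is a Borel subset of the unit ball of L(X,Y) in the strong operator topology. -/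
open Ordinal Set

/-! ### Auxiliary machinery for `stmt15` -/

section SS15Aux

open Set MeasureTheory TopologicalSpace

variable {E F : Type*} [NormedAddCommGroup E] [NormedSpace ℝ E]
  [NormedAddCommGroup F] [NormedSpace ℝ F]

/-- Rational approximation of coefficients of a finite linear combination. -/
lemma exists_rat_comb_approx {n : ℕ} (w : Fin n → E) (a : Fin n → ℝ) {ε : ℝ} (hε : 0 < ε) :
    ∃ q : Fin n → ℚ, ‖∑ i, a i • w i - ∑ i, (q i : ℝ) • w i‖ < ε := by
  set S : ℝ := ∑ i, ‖w i‖ with hS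
  have hS0 : 0 ≤ S := Finset.sum_nonneg fun i _ => norm_nonneg _
  set δ : ℝ := ε / (1 + S) with hδdef
  have hδ : 0 < δ := div_pos hε (by linarith)
  have h : ∀ i : Fin n, ∃ q : ℚ, |a i - (q:ℝ)| < δ := fun i => exists_rat_near (a i) hδ
  choose q hq using h
  refine ⟨q, ?_⟩
  have h1 : ∑ i, a i • w i - ∑ i, (q i : ℝ) • w i = ∑ i, (a i - (q i : ℝ)) • w i := by
    rw [← Finset.sum_sub_distrib]
    congr 1; ext i; rw [sub_smul]
  rw [h1]
  calc ‖∑ i, (a i - (q i : ℝ)) • w i‖ ≤ ∑ i, ‖(a i - (q i : ℝ)) • w i‖ := norm_sum_le _ _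
    _ ≤ ∑ i, δ * ‖w i‖ := by
        refine Finset.sum_le_sum fun i _ => ?_
        rw [norm_smul, Real.norm_eq_abs]
        exact mul_le_mul_of_nonneg_right (le_of_lt (hq i)) (norm_nonneg _)
    _ = δ * S := by rw [hS, Finset.mul_sum]
    _ < δ * (1 + S) := by nlinarith
    _ = ε := by rw [hδdef]; exact div_mul_cancel₀ ε (ne_of_gt (by linarith))

/-- Rational combination of the first `n` terms of a sequence. -/
def combQ (z : ℕ → E) (n : ℕ) (q : Fin n → ℚ) : E := ∑ i, (q i : ℝ) • z i

lemma finsupp_eq_fin_sum (z : ℕ → E) (c : ℕ →₀ ℝ) {n : ℕ} (hn : ∀ i ∈ c.support, i < n) :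
    (c.sum fun i a => a • z i) = ∑ i : Fin n, c i • z i := by
  rw [Finsupp.sum_of_support_subset c (s := Finset.range n)
    (fun i hi => Finset.mem_range.2 (hn i hi)) _ (fun i _ => zero_smul ℝ (z i))]
  exact (Fin.sum_univ_eq_sum_range (fun i => c i • z i) n).symm

/-- Any element of the span of the range of `z` is approximated by rational combinations. -/
lemma span_range_approx (z : ℕ → E) (v : E) (hv : v ∈ Submodule.span ℝ (Set.range z))
    {ε : ℝ} (hε : 0 < ε) : ∃ (n : ℕ) (q : Fin n → ℚ), ‖v - combQ z n q‖ < ε := by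
  obtain ⟨c, rfl⟩ := Finsupp.mem_span_range_iff_exists_finsupp.1 hv
  set n : ℕ := (c.support.sup id) + 1 with hn
  have hsupp : ∀ i ∈ c.support, i < n := fun i hi =>
    Nat.lt_succ_of_le (Finset.le_sup (f := id) hi)
  rw [finsupp_eq_fin_sum z c hsupp]
  obtain ⟨q, hq⟩ := exists_rat_comb_approx (fun i : Fin n => z i) (fun i => c i) hε
  exact ⟨n, q, hq⟩

/-- Any element of the span of `z '' (Iio n)` is approximated by rational
combinations of the first `n` terms. -/
lemma span_image_approx (z : ℕ → E) (n : ℕ) (v : E)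
    (hv : v ∈ Submodule.span ℝ (z '' Set.Iio n)) {ε : ℝ} (hε : 0 < ε) :
    ∃ q : Fin n → ℚ, ‖v - combQ z n q‖ < ε := by
  obtain ⟨c, hc, rfl⟩ := (Finsupp.mem_span_image_iff_linearCombination ℝ).1 hv
  have hsupp : ∀ i ∈ c.support, i < n := fun i hi => (Finsupp.mem_supported ℝ c).1 hc hi
  rw [Finsupp.linearCombination_apply, finsupp_eq_fin_sum z c hsupp]
  obtain ⟨q, hq⟩ := exists_rat_comb_approx (fun i : Fin n => z i) (fun i => c i) hε
  exact ⟨q, hq⟩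

/-- A sequence with uniformly rationally-witnessed distances from spans of initial
segments. -/
def LinIndepCond (z : ℕ → E) : Prop :=
  ∀ n : ℕ, ∃ δ : ℚ, 0 < δ ∧ ∀ q : Fin n → ℚ, (δ : ℝ) ≤ ‖z n - combQ z n q‖

lemma not_mem_span_of_linIndepCond {z : ℕ → E} (h : LinIndepCond z) (n : ℕ) :
    z n ∉ Submodule.span ℝ (z '' Set.Iio n) := by
  intro hmem
  obtain ⟨δ, hδ, hq⟩ := h n
  have hδR : (0:ℝ) < δ := by exact_mod_cast hδ
  obtain ⟨q, hq2⟩ := span_image_approx z n (z n) hmem (half_pos hδR)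
  have := hq q
  linarith

lemma linearIndependent_of_not_mem_span {z : ℕ → E}
    (h : ∀ n, z n ∉ Submodule.span ℝ (z '' Set.Iio n)) : LinearIndependent ℝ z := by
  rw [linearIndependent_iff']
  intro s g hsum i hi
  by_contra hgi
  set t := s.filter (fun j => g j ≠ 0) with ht
  have htne : t.Nonempty := ⟨i, Finset.mem_filter.2 ⟨hi, hgi⟩⟩
  set n := t.max' htne with hn
  have hnt : n ∈ t := t.max'_mem htne
  have hgn : g n ≠ 0 := (Finset.mem_filter.1 hnt).2
  have hp : ∀ x ∈ s, g x • z x ≠ 0 → g x ≠ 0 :=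
    fun x _ hne hgx => hne (by rw [hgx, zero_smul])
  have hsum' : ∑ j ∈ t, g j • z j = 0 := (Finset.sum_filter_of_ne hp).trans hsum
  rw [← Finset.add_sum_erase _ _ hnt] at hsum'
  have hneg : g n • z n = -∑ j ∈ t.erase n, g j • z j := by
    linear_combination (norm := module) hsum'
  have hzn : z n = (g n)⁻¹ • (g n • z n) := by
    rw [smul_smul, inv_mul_cancel₀ hgn, one_smul]
  rw [hneg] at hzn
  apply h n
  rw [hzn]
  refine Submodule.smul_mem _ _ (neg_mem (Submodule.sum_mem _ fun j hj =>
    Submodule.smul_mem _ _ (Submodule.subset_span ⟨j, ?_, rfl⟩)))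
  exact lt_of_le_of_ne (t.le_max' j (Finset.mem_of_mem_erase hj)) (Finset.ne_of_mem_erase hj)

lemma linearIndependent_of_linIndepCond {z : ℕ → E} (h : LinIndepCond z) :
    LinearIndependent ℝ z :=
  linearIndependent_of_not_mem_span (not_mem_span_of_linIndepCond h)

lemma linIndepCond_of_linearIndependent {z : ℕ → E} (hz : LinearIndependent ℝ z) :
    LinIndepCond z := by
  intro n
  set W := Submodule.span ℝ (z '' Set.Iio n) with hW
  haveI : FiniteDimensional ℝ W :=
    FiniteDimensional.span_of_finite ℝ ((Set.finite_Iio n).image z)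
  have hcl : IsClosed (W : Set E) := W.closed_of_finiteDimensional
  have hnm : z n ∉ W := hz.notMem_span_image (by simp)
  have hpos : 0 < Metric.infDist (z n) (W : Set E) :=
    (hcl.notMem_iff_infDist_pos ⟨0, W.zero_mem⟩).1 hnm
  obtain ⟨δ, hδ0, hδlt⟩ := exists_rat_btwn hpos
  refine ⟨δ, by exact_mod_cast hδ0, fun q => ?_⟩
  have hmem : combQ z n q ∈ W := by
    refine Submodule.sum_mem _ fun i _ => Submodule.smul_mem _ _ ?_
    exact Submodule.subset_span ⟨(i : ℕ), i.2, rfl⟩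
  have := Metric.infDist_le_dist_of_mem (x := z n) hmem
  rw [dist_eq_norm] at this
  linarith

lemma not_finiteDimensional_closure_span {z : ℕ → E} (hz : LinearIndependent ℝ z) :
    ¬ FiniteDimensional ℝ (Submodule.span ℝ (Set.range z)).topologicalClosure := by
  intro hfd
  set W := Submodule.span ℝ (Set.range z)
  haveI : FiniteDimensional ℝ W :=
    Submodule.finiteDimensional_of_le W.le_topologicalClosure
  have hzW : ∀ n, z n ∈ W := fun n => Submodule.subset_span ⟨n, rfl⟩
  have hli : LinearIndependent ℝ (fun n => (⟨z n, hzW n⟩ : W)) := by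
    apply LinearIndependent.of_comp W.subtype
    exact hz
  exact Module.Finite.not_linearIndependent_of_infinite _ hli

lemma exists_linIndep_seq (Z : Submodule ℝ E) (h : ¬ FiniteDimensional ℝ Z) :
    ∃ z : ℕ → E, LinearIndependent ℝ z ∧ ∀ n, z n ∈ Z := by
  set b := Module.Basis.ofVectorSpace ℝ Z
  haveI : Infinite (Module.Basis.ofVectorSpaceIndex ℝ Z) := by
    rw [← not_finite_iff_infinite]
    intro hfin
    haveI := Fintype.ofFinite (Module.Basis.ofVectorSpaceIndex ℝ Z)
    exact h (Module.Finite.of_basis b)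
  set emb := Infinite.natEmbedding (Module.Basis.ofVectorSpaceIndex ℝ Z)
  refine ⟨fun n => (b (emb n) : E), ?_, fun n => (b (emb n)).2⟩
  have h1 : LinearIndependent ℝ (fun n => b (emb n)) :=
    b.linearIndependent.comp emb emb.injective
  exact h1.map' Z.subtype Z.ker_subtype

private lemma eps_helper {c t ε : ℝ} (hc : 0 ≤ c) (ht : 0 ≤ t) (hε : 0 < ε) :
    (c + t) * (ε / (c + t + 1)) ≤ ε := by
  have h3 : (c + t) / (c + t + 1) ≤ 1 := by
    rw [div_le_one (by positivity)]; linarith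
  calc (c + t) * (ε / (c + t + 1)) = (c + t) / (c + t + 1) * ε := by ring
    _ ≤ 1 * ε := mul_le_mul_of_nonneg_right h3 hε.le
    _ = ε := one_mul ε

lemma norm_le_on_closure (T : E →L[ℝ] F) (z : ℕ → E) {c : ℝ} (hc : 0 ≤ c)
    (h : ∀ (n : ℕ) (q : Fin n → ℚ), ‖T (combQ z n q)‖ ≤ c * ‖combQ z n q‖) :
    ∀ v ∈ (Submodule.span ℝ (Set.range z)).topologicalClosure, ‖T v‖ ≤ c * ‖v‖ := by
  have hspan : ∀ v ∈ Submodule.span ℝ (Set.range z), ‖T v‖ ≤ c * ‖v‖ := by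
    intro v hv
    refine le_of_forall_pos_le_add fun ε hε => ?_
    have hε' : 0 < ε / (c + ‖T‖ + 1) := by positivity
    obtain ⟨n, q, hq⟩ := span_range_approx z v hv hε'
    set w := combQ z n q
    have h1 : ‖T v‖ ≤ ‖T w‖ + ‖T‖ * ‖v - w‖ := by
      calc ‖T v‖ = ‖T w + T (v - w)‖ := by
            rw [← map_add, show w + (v - w) = v from by abel]
        _ ≤ ‖T w‖ + ‖T (v - w)‖ := norm_add_le _ _
        _ ≤ ‖T w‖ + ‖T‖ * ‖v - w‖ := by linarith [T.le_opNorm (v - w)]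
    have h2 : ‖w‖ ≤ ‖v‖ + ‖v - w‖ := by
      calc ‖w‖ ≤ ‖v‖ + ‖w - v‖ := by
            linarith [norm_sub_norm_le w v, abs_norm_sub_norm_le w v]
        _ = ‖v‖ + ‖v - w‖ := by rw [norm_sub_rev]
    have hTn : 0 ≤ ‖T‖ := norm_nonneg _
    have key : ‖T v‖ ≤ c * ‖v‖ + (c + ‖T‖) * (ε / (c + ‖T‖ + 1)) := by
      have := h n q
      nlinarith [hq, norm_nonneg (v - w)]
    linarith [eps_helper hc hTn hε]
  intro v hv
  have hv' : v ∈ closure (Submodule.span ℝ (Set.range z) : Set E) := by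
    rwa [← Submodule.topologicalClosure_coe]
  have hsub : (Submodule.span ℝ (Set.range z) : Set E) ⊆ {x | ‖T x‖ ≤ c * ‖x‖} := hspan
  have hclosed : IsClosed {x : E | ‖T x‖ ≤ c * ‖x‖} :=
    isClosed_le (T.continuous.norm) (continuous_const.mul continuous_norm)
  exact closure_minimal hsub hclosed hv'

lemma norm_ge_on_closure (T : E →L[ℝ] F) (z : ℕ → E) {c : ℝ} (hc : 0 ≤ c)
    (h : ∀ (n : ℕ) (q : Fin n → ℚ), c * ‖combQ z n q‖ ≤ ‖T (combQ z n q)‖) :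
    ∀ v ∈ (Submodule.span ℝ (Set.range z)).topologicalClosure, c * ‖v‖ ≤ ‖T v‖ := by
  have hspan : ∀ v ∈ Submodule.span ℝ (Set.range z), c * ‖v‖ ≤ ‖T v‖ := by
    intro v hv
    refine le_of_forall_pos_le_add fun ε hε => ?_
    have hε' : 0 < ε / (c + ‖T‖ + 1) := by positivity
    obtain ⟨n, q, hq⟩ := span_range_approx z v hv hε'
    set w := combQ z n q
    have h1 : ‖T w‖ ≤ ‖T v‖ + ‖T‖ * ‖v - w‖ := by
      calc ‖T w‖ = ‖T v + T (w - v)‖ := by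
            rw [← map_add, show v + (w - v) = w from by abel]
        _ ≤ ‖T v‖ + ‖T (w - v)‖ := norm_add_le _ _
        _ ≤ ‖T v‖ + ‖T‖ * ‖w - v‖ := by linarith [T.le_opNorm (w - v)]
        _ = ‖T v‖ + ‖T‖ * ‖v - w‖ := by rw [norm_sub_rev]
    have h2 : ‖v‖ ≤ ‖w‖ + ‖v - w‖ := by
      linarith [norm_sub_norm_le v w, abs_norm_sub_norm_le v w]
    have hTn : 0 ≤ ‖T‖ := norm_nonneg _
    have key : c * ‖v‖ ≤ ‖T v‖ + (c + ‖T‖) * (ε / (c + ‖T‖ + 1)) := by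
      have := h n q
      nlinarith [hq, norm_nonneg (v - w)]
    linarith [eps_helper hc hTn hε]
  intro v hv
  have hv' : v ∈ closure (Submodule.span ℝ (Set.range z) : Set E) := by
    rwa [← Submodule.topologicalClosure_coe]
  have hsub : (Submodule.span ℝ (Set.range z) : Set E) ⊆ {x | c * ‖x‖ ≤ ‖T x‖} := hspan
  have hclosed : IsClosed {x : E | c * ‖x‖ ≤ ‖T x‖} :=
    isClosed_le (continuous_const.mul continuous_norm) (T.continuous.norm)
  exact closure_minimal hsub hclosed hv'

lemma inv_k_pos (k : ℕ) : (0:ℝ) < 1 / ((k:ℝ) + 1) := by positivity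

lemma lipschitz_bound {T : E →L[ℝ] F} (hT : ‖T‖ ≤ 1) (a b : E) :
    ‖T a‖ ≤ ‖T b‖ + ‖a - b‖ := by
  calc ‖T a‖ = ‖T b + T (a - b)‖ := by
        rw [← map_add, show b + (a - b) = a from by abel]
    _ ≤ ‖T b‖ + ‖T (a - b)‖ := norm_add_le _ _
    _ ≤ ‖T b‖ + ‖a - b‖ := by
        have := T.le_opNorm (a - b)
        nlinarith [norm_nonneg (a - b)]

lemma three_div_lt (ε : ℝ) (hε : 0 < ε) : ∃ k : ℕ, 3 / ((k:ℝ) + 1) < ε := by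
  obtain ⟨k, hk⟩ := exists_nat_gt (3 / ε)
  refine ⟨k, ?_⟩
  have hkpos : (0:ℝ) < (k:ℝ) + 1 := by positivity
  have h1 : 3 / ε < (k:ℝ) + 1 := by linarith
  have h2 : (3:ℝ) < ((k:ℝ) + 1) * ε := by
    have := (div_lt_iff₀ hε).1 h1
    linarith
  rw [div_lt_iff₀ hkpos]
  linarith

lemma one_div_succ_lt (ε : ℝ) (hε : 0 < ε) : ∃ k : ℕ, 1 / ((k:ℝ) + 1) < ε := by
  obtain ⟨k, hk⟩ := three_div_lt ε hε
  refine ⟨k, lt_of_le_of_lt ?_ hk⟩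
  gcongr
  norm_num

lemma encode_le {T : E →L[ℝ] F} (hT : ‖T‖ ≤ 1) {d : ℕ → E} (hd : DenseRange d)
    (v : E) (c : ℝ) :
    (∀ k : ℕ, ∃ j, ‖d j - v‖ < 1 / ((k:ℝ) + 1) ∧ ‖T (d j)‖ ≤ c * ‖v‖ + 2 / ((k:ℝ) + 1)) ↔
      ‖T v‖ ≤ c * ‖v‖ := by
  constructor
  · intro h
    refine le_of_forall_pos_le_add fun ε hε => ?_
    obtain ⟨k, hk⟩ := three_div_lt ε hε
    obtain ⟨j, hj1, hj2⟩ := h k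
    have hTd : ‖T v‖ ≤ ‖T (d j)‖ + ‖v - d j‖ := lipschitz_bound hT v (d j)
    have h1 : ‖v - d j‖ < 1 / ((k:ℝ) + 1) := by rwa [norm_sub_rev] at hj1
    have h3 : 2 / ((k:ℝ)+1) + 1 / ((k:ℝ)+1) = 3 / ((k:ℝ)+1) := by ring
    linarith
  · intro h k
    obtain ⟨j, hj⟩ := hd.exists_dist_lt v (inv_k_pos k)
    have h1 : ‖d j - v‖ < 1 / ((k:ℝ) + 1) := by rwa [← dist_eq_norm, dist_comm]
    refine ⟨j, h1, ?_⟩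
    have hTd : ‖T (d j)‖ ≤ ‖T v‖ + ‖d j - v‖ := lipschitz_bound hT (d j) v
    have h2 : (1:ℝ) / ((k:ℝ)+1) ≤ 2 / ((k:ℝ)+1) := by
      gcongr
      norm_num
    linarith

lemma encode_ge {T : E →L[ℝ] F} (hT : ‖T‖ ≤ 1) {d : ℕ → E} (hd : DenseRange d)
    (v : E) (c : ℝ) :
    (∀ k : ℕ, ∃ j, ‖d j - v‖ < 1 / ((k:ℝ) + 1) ∧ c * ‖v‖ ≤ ‖T (d j)‖ + 2 / ((k:ℝ) + 1)) ↔
      c * ‖v‖ ≤ ‖T v‖ := by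
  constructor
  · intro h
    refine le_of_forall_pos_le_add fun ε hε => ?_
    obtain ⟨k, hk⟩ := three_div_lt ε hε
    obtain ⟨j, hj1, hj2⟩ := h k
    have hTd : ‖T (d j)‖ ≤ ‖T v‖ + ‖d j - v‖ := lipschitz_bound hT (d j) v
    have h3 : 2 / ((k:ℝ)+1) + 1 / ((k:ℝ)+1) = 3 / ((k:ℝ)+1) := by ring
    linarith
  · intro h k
    obtain ⟨j, hj⟩ := hd.exists_dist_lt v (inv_k_pos k)
    have h1 : ‖d j - v‖ < 1 / ((k:ℝ) + 1) := by rwa [← dist_eq_norm, dist_comm]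
    refine ⟨j, h1, ?_⟩
    have hTd : ‖T v‖ ≤ ‖T (d j)‖ + ‖v - d j‖ := lipschitz_bound hT v (d j)
    have h2 : ‖v - d j‖ < 1 / ((k:ℝ)+1) := by rwa [norm_sub_rev] at h1
    have h3 : (1:ℝ) / ((k:ℝ)+1) ≤ 2 / ((k:ℝ)+1) := by
      gcongr
      norm_num
    linarith

/-- The rational-combination inequality extends to real coefficients. -/
lemma real_coeff_of_rat {d : ℕ → E} {y : ℕ → F}
    (h : ∀ (n : ℕ) (q : Fin n → ℚ),
      ‖∑ i : Fin n, (q i : ℝ) • y i‖ ≤ ‖∑ i : Fin n, (q i : ℝ) • d i‖)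
    (n : ℕ) (a : Fin n → ℝ) : ‖∑ i : Fin n, a i • y i‖ ≤ ‖∑ i : Fin n, a i • d i‖ := by
  refine le_of_forall_pos_le_add fun ε hε => ?_
  set w : Fin n → E × F := fun i => (d i, y i) with hw
  obtain ⟨q, hq⟩ := exists_rat_comb_approx w a (half_pos hε)
  have hfst : (∑ i, a i • w i - ∑ i, (q i : ℝ) • w i).1
      = ∑ i : Fin n, a i • d i - ∑ i : Fin n, (q i : ℝ) • d i := by
    simp [hw, Prod.fst_sum]
  have hsnd : (∑ i, a i • w i - ∑ i, (q i : ℝ) • w i).2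
      = ∑ i : Fin n, a i • y i - ∑ i : Fin n, (q i : ℝ) • y i := by
    simp [hw, Prod.snd_sum]
  have h1 : ‖∑ i : Fin n, a i • d i - ∑ i : Fin n, (q i : ℝ) • d i‖ < ε/2 := by
    rw [← hfst]; exact lt_of_le_of_lt (norm_fst_le _) hq
  have h2 : ‖∑ i : Fin n, a i • y i - ∑ i : Fin n, (q i : ℝ) • y i‖ < ε/2 := by
    rw [← hsnd]; exact lt_of_le_of_lt (norm_snd_le _) hq
  have hq' := h n q
  have e1' := abs_norm_sub_norm_le (∑ i : Fin n, a i • y i) (∑ i : Fin n, (q i:ℝ) • y i)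
  have e2' := abs_norm_sub_norm_le (∑ i : Fin n, (q i:ℝ) • d i) (∑ i : Fin n, a i • d i)
  rw [norm_sub_rev] at e2'
  linarith [abs_le.1 e1', abs_le.1 e2']

/-- Extension theorem: a sequence satisfying the range condition comes from an operator. -/
theorem exists_operator_of_rangeCond [CompleteSpace F] {d : ℕ → E} (hd : DenseRange d)
    {y : ℕ → F}
    (h : ∀ (n : ℕ) (q : Fin n → ℚ),
      ‖∑ i : Fin n, (q i : ℝ) • y i‖ ≤ ‖∑ i : Fin n, (q i : ℝ) • d i‖) :
    ∃ T : E →L[ℝ] F, ‖T‖ ≤ 1 ∧ ∀ n, T (d n) = y n := by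
  classical
  set ℓX : (ℕ →₀ ℝ) →ₗ[ℝ] E := Finsupp.linearCombination ℝ d with hℓX
  set ℓY : (ℕ →₀ ℝ) →ₗ[ℝ] F := Finsupp.linearCombination ℝ y with hℓY
  have hfs : ∀ c : ℕ →₀ ℝ, ‖ℓY c‖ ≤ ‖ℓX c‖ := by
    intro c
    set n := (c.support.sup id) + 1 with hn
    have hsupp : ∀ i ∈ c.support, i < n := fun i hi =>
      Nat.lt_succ_of_le (Finset.le_sup (f := id) hi)
    have e1 : ℓX c = ∑ i : Fin n, c i • d i := by
      rw [hℓX, Finsupp.linearCombination_apply]; exact finsupp_eq_fin_sum d c hsupp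
    have e2 : ℓY c = ∑ i : Fin n, c i • y i := by
      rw [hℓY, Finsupp.linearCombination_apply]; exact finsupp_eq_fin_sum y c hsupp
    rw [e1, e2]
    exact real_coeff_of_rat h n fun i => c i
  have hker : LinearMap.ker ℓX ≤ LinearMap.ker ℓY := by
    intro c hc
    rw [LinearMap.mem_ker] at hc ⊢
    have := hfs c
    rw [hc, norm_zero] at this
    exact norm_le_zero_iff.1 this
  set q0 : ((ℕ →₀ ℝ) ⧸ LinearMap.ker ℓX) →ₗ[ℝ] F := Submodule.liftQ _ ℓY hker with hq0
  set e := ℓX.quotKerEquivRange with he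
  set g : LinearMap.range ℓX →ₗ[ℝ] F := q0.comp (e.symm : _ ≃ₗ[ℝ] _).toLinearMap with hg
  have hgkey : ∀ c : ℕ →₀ ℝ, g ⟨ℓX c, LinearMap.mem_range_self _ c⟩ = ℓY c := by
    intro c
    have h1 : e (Submodule.Quotient.mk c) = ⟨ℓX c, LinearMap.mem_range_self _ c⟩ :=
      Subtype.ext (ℓX.quotKerEquivRange_apply_mk c)
    have h2 : e.symm ⟨ℓX c, LinearMap.mem_range_self _ c⟩ = Submodule.Quotient.mk c := by
      rw [← h1, LinearEquiv.symm_apply_apply]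
    rw [hg]
    simp only [LinearMap.comp_apply, LinearEquiv.coe_coe, h2, hq0, Submodule.liftQ_apply]
  have hbound : ∀ v : LinearMap.range ℓX, ‖g v‖ ≤ 1 * ‖v‖ := by
    rintro ⟨v, hv⟩
    obtain ⟨c, rfl⟩ := hv
    rw [one_mul]
    have heq : (⟨ℓX c, LinearMap.mem_range_self _ c⟩ : LinearMap.range ℓX)
        = ⟨ℓX c, ⟨c, rfl⟩⟩ := rfl
    rw [← heq, hgkey c]
    exact hfs c
  set gL : LinearMap.range ℓX →L[ℝ] F := g.mkContinuous 1 hbound with hgL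
  have hdr : Dense (LinearMap.range ℓX : Set E) := by
    apply Dense.mono _ hd
    rintro v ⟨n, rfl⟩
    exact ⟨Finsupp.single n 1, by simp [hℓX]⟩
  set T : E →L[ℝ] F := gL.extend (Submodule.subtypeL (LinearMap.range ℓX)) with hT
  have hText : ∀ v : LinearMap.range ℓX, T v = gL v := fun v =>
    ContinuousLinearMap.extend_eq _ hdr.denseRange_val isUniformEmbedding_subtype_val.isUniformInducing _
  have hTd : ∀ n, T (d n) = y n := by
    intro n
    have hmem : d n ∈ LinearMap.range ℓX := ⟨Finsupp.single n 1, by simp [hℓX]⟩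
    have h1 : T (d n) = gL ⟨d n, hmem⟩ := hText ⟨d n, hmem⟩
    have h2 : (⟨d n, hmem⟩ : LinearMap.range ℓX)
        = ⟨ℓX (Finsupp.single n 1), LinearMap.mem_range_self _ _⟩ := by
      apply Subtype.ext; simp [hℓX]
    rw [h1, h2]
    have := hgkey (Finsupp.single n 1)
    rw [hgL]
    simpa [hℓY] using this
  refine ⟨T, ?_, hTd⟩
  apply ContinuousLinearMap.opNorm_le_bound _ zero_le_one
  intro x
  rw [one_mul]
  have hsub : (LinearMap.range ℓX : Set E) ⊆ {x : E | ‖T x‖ ≤ ‖x‖} := by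
    intro v hv
    have h1 : T v = gL ⟨v, hv⟩ := hText ⟨v, hv⟩
    rw [mem_setOf_eq, h1]
    have hn : ‖gL‖ ≤ 1 := g.mkContinuous_norm_le zero_le_one hbound
    have hvn : ‖(⟨v, hv⟩ : LinearMap.range ℓX)‖ = ‖v‖ := rfl
    calc ‖gL ⟨v, hv⟩‖ ≤ ‖gL‖ * ‖(⟨v, hv⟩ : LinearMap.range ℓX)‖ := gL.le_opNorm _
      _ ≤ 1 * ‖v‖ := by rw [hvn]; exact mul_le_mul_of_nonneg_right hn (norm_nonneg v)
      _ = ‖v‖ := one_mul _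
  have hclosed : IsClosed {x : E | ‖T x‖ ≤ ‖x‖} := isClosed_le T.continuous.norm continuous_norm
  have hcl : closure (LinearMap.range ℓX : Set E) ⊆ {x : E | ‖T x‖ ≤ ‖x‖} :=
    closure_minimal hsub hclosed
  rw [hdr.closure_eq] at hcl
  exact hcl (mem_univ x)

end SS15Aux

section SS15Main

open Set MeasureTheory TopologicalSpace

variable {X Y : Type*} [NormedAddCommGroup X] [NormedSpace ℝ X]
  [NormedAddCommGroup Y] [NormedSpace ℝ Y]

variable (d : ℕ → X)

/-- The coded set of witnesses for `‖R|_Z‖ < 1/(m+1)`. -/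
def ESet (m : ℕ) : Set ((ℕ → Y) × ((ℕ → X) × ℝ)) :=
  {p | (∀ (n : ℕ) (q : Fin n → ℚ), ‖∑ i : Fin n, (q i:ℝ) • p.1 i‖ ≤ ‖combQ d n q‖)
     ∧ LinIndepCond p.2.1 ∧ 0 ≤ p.2.2 ∧ p.2.2 < 1/((m:ℝ)+1)
     ∧ ∀ (n : ℕ) (q : Fin n → ℚ) (k : ℕ), ∃ j, ‖d j - combQ p.2.1 n q‖ < 1/((k:ℝ)+1)
         ∧ ‖p.1 j‖ ≤ p.2.2 * ‖combQ p.2.1 n q‖ + 2/((k:ℝ)+1)}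

/-- The coded set of witnesses for `R` being bounded below by `1/(m+1)` on
an infinite-dimensional closed subspace. -/
def FSet (m : ℕ) : Set ((ℕ → Y) × ((ℕ → X) × ℝ)) :=
  {p | (∀ (n : ℕ) (q : Fin n → ℚ), ‖∑ i : Fin n, (q i:ℝ) • p.1 i‖ ≤ ‖combQ d n q‖)
     ∧ LinIndepCond p.2.1
     ∧ ∀ (n : ℕ) (q : Fin n → ℚ) (k : ℕ), ∃ j, ‖d j - combQ p.2.1 n q‖ < 1/((k:ℝ)+1)
         ∧ (1/((m:ℝ)+1)) * ‖combQ p.2.1 n q‖ ≤ ‖p.1 j‖ + 2/((k:ℝ)+1)}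

lemma cont_combz (n : ℕ) (q : Fin n → ℚ) :
    Continuous fun p : (ℕ → Y) × ((ℕ → X) × ℝ) => combQ p.2.1 n q := by
  unfold combQ
  exact continuous_finset_sum _ fun i _ =>
    (((continuous_apply (i:ℕ)).comp (continuous_fst.comp continuous_snd)).const_smul _)

lemma cont_comby (n : ℕ) (q : Fin n → ℚ) :
    Continuous fun p : (ℕ → Y) × ((ℕ → X) × ℝ) => ∑ i : Fin n, (q i:ℝ) • p.1 i :=
  continuous_finset_sum _ fun i _ =>
    (((continuous_apply (i:ℕ)).comp continuous_fst).const_smul _)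

variable [MeasurableSpace X] [BorelSpace X] [SecondCountableTopology X]
  [MeasurableSpace Y] [BorelSpace Y] [SecondCountableTopology Y]

lemma measurable_ESet (m : ℕ) : MeasurableSet (ESet (Y := Y) d m) := by
  unfold ESet
  simp only [setOf_and]
  refine MeasurableSet.inter ?_ (MeasurableSet.inter ?_ (MeasurableSet.inter ?_
    (MeasurableSet.inter ?_ ?_)))
  · rw [setOf_forall]
    refine MeasurableSet.iInter fun n => ?_
    rw [setOf_forall]
    refine MeasurableSet.iInter fun q => ?_
    exact (isClosed_le (cont_comby n q).norm continuous_const).measurableSet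
  · unfold LinIndepCond
    rw [setOf_forall]
    refine MeasurableSet.iInter fun n => ?_
    rw [setOf_exists]
    refine MeasurableSet.iUnion fun δ => ?_
    simp only [setOf_and]
    refine MeasurableSet.inter ?_ ?_
    · by_cases h : 0 < δ <;> simp [h]
    · rw [setOf_forall]
      refine MeasurableSet.iInter fun q => ?_
      refine (isClosed_le continuous_const ?_).measurableSet
      exact (((continuous_apply n).comp (continuous_fst.comp continuous_snd)).sub
        (cont_combz n q)).norm
  · exact (isClosed_le continuous_const (continuous_snd.comp continuous_snd)).measurableSet
  · exact (isOpen_lt (continuous_snd.comp continuous_snd) continuous_const).measurableSet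
  · rw [setOf_forall]
    refine MeasurableSet.iInter fun n => ?_
    rw [setOf_forall]
    refine MeasurableSet.iInter fun q => ?_
    rw [setOf_forall]
    refine MeasurableSet.iInter fun k => ?_
    rw [setOf_exists]
    refine MeasurableSet.iUnion fun j => ?_
    simp only [setOf_and]
    refine MeasurableSet.inter ?_ ?_
    · exact (isOpen_lt (continuous_const.sub (cont_combz n q)).norm
        continuous_const).measurableSet
    · refine (isClosed_le (((continuous_apply j).comp continuous_fst).norm) ?_).measurableSet
      exact ((continuous_snd.comp continuous_snd).mul (cont_combz n q).norm).add
        continuous_const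

lemma measurable_FSet (m : ℕ) : MeasurableSet (FSet (Y := Y) d m) := by
  unfold FSet
  simp only [setOf_and]
  refine MeasurableSet.inter ?_ (MeasurableSet.inter ?_ ?_)
  · rw [setOf_forall]
    refine MeasurableSet.iInter fun n => ?_
    rw [setOf_forall]
    refine MeasurableSet.iInter fun q => ?_
    exact (isClosed_le (cont_comby n q).norm continuous_const).measurableSet
  · unfold LinIndepCond
    rw [setOf_forall]
    refine MeasurableSet.iInter fun n => ?_
    rw [setOf_exists]
    refine MeasurableSet.iUnion fun δ => ?_
    simp only [setOf_and]
    refine MeasurableSet.inter ?_ ?_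
    · by_cases h : 0 < δ <;> simp [h]
    · rw [setOf_forall]
      refine MeasurableSet.iInter fun q => ?_
      refine (isClosed_le continuous_const ?_).measurableSet
      exact (((continuous_apply n).comp (continuous_fst.comp continuous_snd)).sub
        (cont_combz n q)).norm
  · rw [setOf_forall]
    refine MeasurableSet.iInter fun n => ?_
    rw [setOf_forall]
    refine MeasurableSet.iInter fun q => ?_
    rw [setOf_forall]
    refine MeasurableSet.iInter fun k => ?_
    rw [setOf_exists]
    refine MeasurableSet.iUnion fun j => ?_
    simp only [setOf_and]
    refine MeasurableSet.inter ?_ ?_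
    · exact (isOpen_lt (continuous_const.sub (cont_combz n q)).norm
        continuous_const).measurableSet
    · refine (isClosed_le (continuous_const.mul (cont_combz n q).norm) ?_).measurableSet
      exact (((continuous_apply j).comp continuous_fst).norm).add continuous_const

lemma combQ_mem {z : ℕ → X} {Z : Submodule ℝ X} (hz : ∀ n, z n ∈ Z) (n : ℕ) (q : Fin n → ℚ) :
    combQ z n q ∈ Z :=
  Submodule.sum_mem _ fun i _ => Submodule.smul_mem _ _ (hz i)

lemma map_combQ (T : X →L[ℝ] Y) (z : ℕ → X) (n : ℕ) (q : Fin n → ℚ) :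
    ∑ i : Fin n, (q i : ℝ) • T (z i) = T (combQ z n q) := by
  rw [combQ, map_sum]
  simp

lemma rangeCond_of_op {T : X →L[ℝ] Y} (hT : ‖T‖ ≤ 1) (n : ℕ) (q : Fin n → ℚ) :
    ‖∑ i : Fin n, (q i:ℝ) • T (d i)‖ ≤ ‖combQ d n q‖ := by
  rw [map_combQ]
  calc ‖T (combQ d n q)‖ ≤ ‖T‖ * ‖combQ d n q‖ := T.le_opNorm _
    _ ≤ 1 * ‖combQ d n q‖ := mul_le_mul_of_nonneg_right hT (norm_nonneg _)
    _ = ‖combQ d n q‖ := one_mul _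

lemma mem_ESet_image_iff (hd : DenseRange d) {T : X →L[ℝ] Y} (hT : ‖T‖ ≤ 1) (m : ℕ) :
    ((fun n => T (d n)) : ℕ → Y) ∈ (fun p : (ℕ → Y) × ((ℕ → X) × ℝ) => p.1) '' (ESet d m) ↔
      ∃ Z : Submodule ℝ X, IsClosed (Z : Set X) ∧ ¬ FiniteDimensional ℝ Z ∧
        RestrictNormLt T Z (1/((m:ℝ)+1)) := by
  constructor
  · rintro ⟨⟨y, z, c⟩, ⟨-, hli, hc0, hclt, hup⟩, hy⟩
    simp only at hy
    subst hy
    have hli' := linearIndependent_of_linIndepCond hli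
    refine ⟨(Submodule.span ℝ (Set.range z)).topologicalClosure,
      (Submodule.span ℝ (Set.range z)).isClosed_topologicalClosure,
      not_finiteDimensional_closure_span hli', c, hc0, hclt, ?_⟩
    apply norm_le_on_closure T z hc0
    intro n q
    exact (encode_le hT hd (combQ z n q) c).1 (hup n q)
  · rintro ⟨Z, hZc, hZfd, c, hc0, hclt, hbd⟩
    obtain ⟨z, hli, hzZ⟩ := exists_linIndep_seq Z hZfd
    refine ⟨((fun n => T (d n)), z, c), ⟨fun n q => rangeCond_of_op d hT n q,
      linIndepCond_of_linearIndependent hli, hc0, hclt, fun n q => ?_⟩, rfl⟩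
    exact (encode_le hT hd (combQ z n q) c).2 (hbd _ (combQ_mem hzZ n q))

lemma mem_FSet_image_iff (hd : DenseRange d) {T : X →L[ℝ] Y} (hT : ‖T‖ ≤ 1) (m : ℕ) :
    ((fun n => T (d n)) : ℕ → Y) ∈ (fun p : (ℕ → Y) × ((ℕ → X) × ℝ) => p.1) '' (FSet d m) ↔
      ∃ Z : Submodule ℝ X, IsClosed (Z : Set X) ∧ ¬ FiniteDimensional ℝ Z ∧
        ∀ v ∈ Z, (1/((m:ℝ)+1)) * ‖v‖ ≤ ‖T v‖ := by
  have hm0 : (0:ℝ) ≤ 1/((m:ℝ)+1) := by positivity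
  constructor
  · rintro ⟨⟨y, z, c⟩, ⟨-, hli, hlow⟩, hy⟩
    simp only at hy
    subst hy
    have hli' := linearIndependent_of_linIndepCond hli
    refine ⟨(Submodule.span ℝ (Set.range z)).topologicalClosure,
      (Submodule.span ℝ (Set.range z)).isClosed_topologicalClosure,
      not_finiteDimensional_closure_span hli', ?_⟩
    apply norm_ge_on_closure T z hm0
    intro n q
    exact (encode_ge hT hd (combQ z n q) _).1 (hlow n q)
  · rintro ⟨Z, hZc, hZfd, hbd⟩
    obtain ⟨z, hli, hzZ⟩ := exists_linIndep_seq Z hZfd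
    refine ⟨((fun n => T (d n)), z, 0), ⟨fun n q => rangeCond_of_op d hT n q,
      linIndepCond_of_linearIndependent hli, fun n q => ?_⟩, rfl⟩
    exact (encode_ge hT hd (combQ z n q) _).2 (hbd _ (combQ_mem hzZ n q))

end SS15Main

section Theorems

open MeasureTheory TopologicalSpace

theorem stmt15 {X Y : Type*} [NormedAddCommGroup X] [NormedSpace ℝ X] [CompleteSpace X]
    [SeparableSpace X] [NormedAddCommGroup Y] [NormedSpace ℝ Y] [CompleteSpace Y]
    [SeparableSpace Y]
    (hchar : ∀ R : X →L[ℝ] Y, StrictlySingular R ↔ ∀ ε > (0:ℝ),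
      ∃ Z : Submodule ℝ X, IsClosed (Z : Set X) ∧ ¬ FiniteDimensional ℝ Z ∧
        RestrictNormLt R Z ε) :
    MeasurableSet[borel (SOTBall X Y)] {T : SOTBall X Y | StrictlySingular T.op} := by
  classical
  letI : MeasurableSpace X := borel X
  haveI : BorelSpace X := ⟨rfl⟩
  letI : MeasurableSpace Y := borel Y
  haveI : BorelSpace Y := ⟨rfl⟩
  haveI : SecondCountableTopology X := UniformSpace.secondCountable_of_separable X
  haveI : SecondCountableTopology Y := UniformSpace.secondCountable_of_separable Y
  haveI : Nonempty X := ⟨0⟩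
  obtain ⟨d, hd⟩ := TopologicalSpace.exists_dense_seq X
  letI : MeasurableSpace (SOTBall X Y) := borel (SOTBall X Y)
  haveI : BorelSpace (SOTBall X Y) := ⟨rfl⟩
  set Φ : SOTBall X Y → (ℕ → Y) := fun T n => T.op (d n) with hΦ
  have hΦc : Continuous Φ := by
    apply continuous_pi
    intro n
    have h1 : Continuous fun T : SOTBall X Y => ((Subtype.val T : X →L[ℝ] Y) : X → Y) :=
      continuous_induced_dom
    exact (continuous_apply (d n)).comp h1
  set P1 : Set (ℕ → Y) :=
    ⋂ m : ℕ, (fun p : (ℕ → Y) × ((ℕ → X) × ℝ) => p.1) '' (ESet d m) with hP1def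
  set P2 : Set (ℕ → Y) :=
    ⋃ m : ℕ, (fun p : (ℕ → Y) × ((ℕ → X) × ℝ) => p.1) '' (FSet d m) with hP2def
  have hP1 : MeasureTheory.AnalyticSet P1 :=
    MeasureTheory.AnalyticSet.iInter fun m =>
      ((measurable_ESet d m).analyticSet).image_of_continuous continuous_fst
  have hP2 : MeasureTheory.AnalyticSet P2 :=
    MeasureTheory.AnalyticSet.iUnion fun m =>
      ((measurable_FSet d m).analyticSet).image_of_continuous continuous_fst
  -- characterization of strict singularity via P1
  have hup : ∀ T : X →L[ℝ] Y, ‖T‖ ≤ 1 →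
      (StrictlySingular T ↔ ((fun n => T (d n)) : ℕ → Y) ∈ P1) := by
    intro T hT
    rw [hP1def, Set.mem_iInter]
    constructor
    · intro ss m
      rw [mem_ESet_image_iff d hd hT m]
      exact (hchar T).1 ss _ (inv_k_pos m)
    · intro h
      apply (hchar T).2
      intro ε hε
      obtain ⟨m, hm⟩ := one_div_succ_lt ε hε
      obtain ⟨Z, h1, h2, c, hc0, hclt, hbd⟩ := (mem_ESet_image_iff d hd hT m).1 (h m)
      exact ⟨Z, h1, h2, c, hc0, lt_trans hclt hm, hbd⟩
  -- characterization of non-strict-singularity via P2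
  have hdown : ∀ T : X →L[ℝ] Y, ‖T‖ ≤ 1 →
      (¬ StrictlySingular T ↔ ((fun n => T (d n)) : ℕ → Y) ∈ P2) := by
    intro T hT
    rw [hP2def, Set.mem_iUnion]
    constructor
    · intro h
      rw [StrictlySingular] at h
      push_neg at h
      obtain ⟨Z, hZc, hZfd, c, hc0, hbd⟩ := h
      obtain ⟨m, hm⟩ := one_div_succ_lt c hc0
      refine ⟨m, (mem_FSet_image_iff d hd hT m).2 ⟨Z, hZc, hZfd, fun v hv => ?_⟩⟩
      calc (1/((m:ℝ)+1)) * ‖v‖ ≤ c * ‖v‖ :=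
            mul_le_mul_of_nonneg_right hm.le (norm_nonneg v)
        _ ≤ ‖T v‖ := hbd v hv
    · rintro ⟨m, hm⟩ ss
      obtain ⟨Z, hZc, hZfd, hbd⟩ := (mem_FSet_image_iff d hd hT m).1 hm
      exact ss Z hZc hZfd ⟨1/((m:ℝ)+1), inv_k_pos m, hbd⟩
  -- the two analytic sets are disjoint
  have hdisj : Disjoint P1 P2 := by
    rw [Set.disjoint_left]
    rintro y hy1 hy2
    obtain ⟨m, p, hpF, hpy⟩ := Set.mem_iUnion.1 hy2
    have hrc : ∀ (n : ℕ) (q : Fin n → ℚ),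
        ‖∑ i : Fin n, (q i : ℝ) • y i‖ ≤ ‖∑ i : Fin n, (q i : ℝ) • d i‖ := by
      intro n q
      have hpy' : p.1 = y := hpy
      rw [← hpy']
      exact hpF.1 n q
    obtain ⟨T, hT1, hTd⟩ := exists_operator_of_rangeCond hd hrc
    have hyT : y = fun n => T (d n) := funext fun n => (hTd n).symm
    have hss : StrictlySingular T := (hup T hT1).2 (by rw [← hyT]; exact hy1)
    refine (hdown T hT1).2 ?_ hss
    rw [← hyT]
    exact hy2
  -- separate by a Borel set
  obtain ⟨u, hsu, hdu, humeas⟩ := hP1.measurablySeparable hP2 hdisj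
  have hset : {T : SOTBall X Y | StrictlySingular T.op} = Φ ⁻¹' u := by
    ext T
    have hT1 : ‖T.op‖ ≤ 1 := T.2
    simp only [Set.mem_setOf_eq, Set.mem_preimage]
    constructor
    · intro ss
      exact hsu ((hup T.op hT1).1 ss)
    · intro hu
      by_contra hss
      exact Set.disjoint_left.1 hdu ((hdown T.op hT1).1 hss) hu
  rw [hset]
  exact hΦc.measurable humeas

end Theorems
end

section
/- Let X, Y be separable Banach spaces with B(SS(X,Y)) Borel in B(L(X,Y)) (strong operator topology), and fix m ∈ ℕ. The map φ_m sending a pair (R, (x_n)) ∈ B(SS(X,Y)) × 𝔅_X to the tree T(R, m, (x_n)) = {(l_1,...,l_n) : ∀ rational tuples (a_i), ‖R ∑ a_i x_{l_i}‖ ≥ (1/m)‖∑ a_i x_{l_i}‖} is a Borel map into the Polish space Tr of trees on ℕ. -/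
open Ordinal Set

section Theorems

open MeasureTheory TopologicalSpace

open Filter Topology in
lemma sotEval_continuous {X Y : Type*} [NormedAddCommGroup X] [NormedSpace ℝ X]
    [NormedAddCommGroup Y] [NormedSpace ℝ Y] :
    Continuous (fun q : SOTBall X Y × X => q.1.op q.2) := by
  rw [continuous_iff_continuousAt]
  rintro ⟨T₀, v₀⟩
  have h1 : Tendsto (fun q : SOTBall X Y × X => q.1.op (q.2 - v₀)) (𝓝 (T₀, v₀)) (𝓝 0) := by
    refine squeeze_zero_norm (a := fun q : SOTBall X Y × X => ‖q.2 - v₀‖) ?_ ?_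
    · intro q
      calc ‖q.1.op (q.2 - v₀)‖ ≤ ‖q.1.op‖ * ‖q.2 - v₀‖ := q.1.op.le_opNorm _
        _ ≤ 1 * ‖q.2 - v₀‖ := by
            gcongr
            exact (show {T : X →L[ℝ] Y // ‖T‖ ≤ 1} from q.1).2
        _ = ‖q.2 - v₀‖ := one_mul _
    · have : Tendsto (fun q : SOTBall X Y × X => ‖q.2 - v₀‖) (𝓝 (T₀, v₀)) (𝓝 ‖v₀ - v₀‖) :=
        ((continuous_snd.sub continuous_const).norm).tendsto _
      simpa using this
  have hc : Continuous (fun T : SOTBall X Y => T.op v₀) :=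
    (continuous_apply v₀).comp continuous_induced_dom
  have h2 : Tendsto (fun q : SOTBall X Y × X => q.1.op v₀) (𝓝 (T₀, v₀)) (𝓝 (T₀.op v₀)) :=
    ((hc.comp continuous_fst).tendsto _)
  have := h1.add h2
  rw [zero_add] at this
  unfold ContinuousAt
  convert this using 2 with q
  rw [← map_add]
  congr 1
  abel

lemma ratComb_congr {X : Type*} [NormedAddCommGroup X] [NormedSpace ℝ X]
    (x : ℕ → X) (l : List ℕ) (a a' : ℕ → ℚ) (h : ∀ i < l.length, a i = a' i) :
    ratComb x l a = ratComb x l a' := by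
  unfold ratComb
  refine Finset.sum_congr rfl fun i hi => ?_
  rw [h i (Finset.mem_range.mp hi)]

theorem stmt18 {X Y : Type*} [NormedAddCommGroup X] [NormedSpace ℝ X] [CompleteSpace X]
    [SeparableSpace X] [NormedAddCommGroup Y] [NormedSpace ℝ Y] [CompleteSpace Y]
    [SeparableSpace Y]
    (hBorel : MeasurableSet[borel (SOTBall X Y)]
      {T : SOTBall X Y | StrictlySingular T.op}) (m : ℕ) (hm : 1 ≤ m) :
    @Measurable {p : SOTBall X Y × (ℕ → X) // StrictlySingular p.1.op ∧ NormalizedBasicSeq p.2}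
      (List ℕ → Bool) (borel _) (borel _)
      (fun p => phiTree m p.1.1.op p.1.2) := by
  set D := {p : SOTBall X Y × (ℕ → X) // StrictlySingular p.1.op ∧ NormalizedBasicSeq p.2}
  letI mD : MeasurableSpace D := borel D
  haveI : BorelSpace D := ⟨rfl⟩
  have hpi : (borel (List ℕ → Bool) : MeasurableSpace (List ℕ → Bool)) =
      MeasurableSpace.pi := BorelSpace.measurable_eq.symm
  rw [hpi, measurable_pi_iff]
  intro l
  have hx : Continuous fun p : D => p.1.2 := continuous_snd.comp continuous_subtype_val
  have hT : Continuous fun p : D => p.1.1 := continuous_fst.comp continuous_subtype_val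
  have hS : MeasurableSet {p : D | l ∈ opTree p.1.1.op m p.1.2} := by
    have key : {p : D | l ∈ opTree p.1.1.op m p.1.2} =
        ⋂ b : Fin l.length → ℚ,
          {p : D | (1 / (m : ℝ)) *
              ‖ratComb p.1.2 l (fun i => if h : i < l.length then b ⟨i, h⟩ else 0)‖ ≤
            ‖p.1.1.op (ratComb p.1.2 l (fun i => if h : i < l.length then b ⟨i, h⟩ else 0))‖} := by
      ext p
      simp only [Set.mem_iInter, Set.mem_setOf_eq]
      constructor
      · intro h b; exact h _
      · intro h a
        have := h (fun i => a i.1)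
        rwa [ratComb_congr p.1.2 l _ a (fun i hi => by simp [dif_pos hi])] at this
    rw [key]
    refine MeasurableSet.iInter fun b => ?_
    set a : ℕ → ℚ := fun i => if h : i < l.length then b ⟨i, h⟩ else 0
    have hrc : Continuous fun p : D => ratComb p.1.2 l a := by
      unfold ratComb
      exact continuous_finset_sum _ fun i _ => continuous_const.smul ((continuous_apply _).comp hx)
    have hf : Continuous fun p : D => ‖p.1.1.op (ratComb p.1.2 l a)‖ :=
      (sotEval_continuous.comp (hT.prodMk hrc)).norm
    have hg : Continuous fun p : D => (1 / (m : ℝ)) * ‖ratComb p.1.2 l a‖ :=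
      continuous_const.mul hrc.norm
    exact (isClosed_le hg hf).measurableSet
  refine measurable_to_countable' fun y => ?_
  cases y
  · have : (fun p : D => phiTree m p.1.1.op p.1.2 l) ⁻¹' {false} =
        {p : D | l ∈ opTree p.1.1.op m p.1.2}ᶜ := by
      ext p; simp [phiTree]
    rw [this]; exact hS.compl
  · have : (fun p : D => phiTree m p.1.1.op p.1.2 l) ⁻¹' {true} =
        {p : D | l ∈ opTree p.1.1.op m p.1.2} := by
      ext p; simp [phiTree]
    rw [this]; exact hS

end Theorems
end
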